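/- arXiv:2107.11764 — 5 statements merged into one kernel-verified Lean document; each statement's English description precedes it below -/
import Mathlib

section
/- Under the hypotheses of the hierarchical chordality proposition (G chordal, partition into blocks with complete bipartite connections between adjacent blocks), if K̄ = {C̄₁,…,C̄_m} is the set of maximal cliques of the quotient graph G̅ and, for each i, K_i is the set of maximal cliques of the subgraph of G induced by the union of blocks in C̄_i, then the set of maximal cliques of G equals the union of the K_i over i = 1,…,m. -/
/-- A simple graph is chordal if every (injective) cycle of length at least 4 has a chord. -/
def IsChordal {V : Type*} (G : SimpleGraph V) : Prop :=
  ∀ n : ℕ, 4 ≤ n → ∀ f : ZMod n → V, Function.Injective f →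
    (∀ i, G.Adj (f i) (f (i + 1))) →
    ∃ i j : ZMod n, i ≠ j ∧ j ≠ i + 1 ∧ i ≠ j + 1 ∧ G.Adj (f i) (f j)

/-- A maximal clique: a clique not properly contained in any other clique. -/
def IsMaxClq {V : Type*} (G : SimpleGraph V) (s : Set V) : Prop :=
  G.IsClique s ∧ ∀ t : Set V, G.IsClique t → s ⊆ t → s = t

/-- In a finite graph, every clique extends to a maximal clique. -/
lemma exists_maxclq_ext {V : Type*} [Fintype V] (G : SimpleGraph V) (s : Set V)
    (hs : G.IsClique s) : ∃ t : Set V, IsMaxClq G t ∧ s ⊆ t := by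
  obtain ⟨t, ⟨ht, hst⟩, hmax⟩ := Set.Finite.exists_maximalFor id
    {t : Set V | G.IsClique t ∧ s ⊆ t} (Set.toFinite _) ⟨s, hs, subset_rfl⟩
  exact ⟨t, ⟨ht, fun u hu htu => le_antisymm htu (hmax ⟨hu, hst.trans htu⟩ htu)⟩, hst⟩

/-- under the hypotheses of the hierarchical chordality proposition (G chordal,
partition into blocks with complete bipartite connections between adjacent blocks), the
maximal cliques of `G` are exactly the maximal cliques of the subgraphs of `G` induced by
the unions of blocks of the maximal cliques of the quotient graph `Gbar`. -/
theorem stmt1 {V B : Type*} [Fintype V] [Fintype B]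
    (G : SimpleGraph V) (blk : V → B) (hsurj : Function.Surjective blk)
    (Gbar : SimpleGraph B)
    (hGbar : ∀ b b' : B, Gbar.Adj b b' ↔
      b ≠ b' ∧ ∃ v w : V, blk v = b ∧ blk w = b' ∧ G.Adj v w)
    (hcomp : ∀ v w : V, blk v ≠ blk w → Gbar.Adj (blk v) (blk w) → G.Adj v w)
    (hchordal : IsChordal G) :
    ∀ s : Set V, IsMaxClq G s ↔
      ∃ C : Set B, IsMaxClq Gbar C ∧
        ∃ t : Set {v : V // blk v ∈ C},
          IsMaxClq (SimpleGraph.induce {v : V | blk v ∈ C} G) t ∧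
          s = Subtype.val '' t := by
  have himg : ∀ s : Set V, G.IsClique s → Gbar.IsClique (blk '' s) := by
    rintro s hclq b ⟨v, hv, rfl⟩ b' ⟨w, hw, rfl⟩ hne
    have hvw : v ≠ w := fun h => hne (by rw [h])
    exact (hGbar _ _).2 ⟨hne, v, w, rfl, rfl, hclq hv hw hvw⟩
  intro s
  constructor
  · rintro ⟨hclq, hmax⟩
    obtain ⟨C, hCmax, hsub⟩ := exists_maxclq_ext Gbar _ (himg s hclq)
    refine ⟨C, hCmax, ?_⟩
    have hmem : ∀ v ∈ s, blk v ∈ C := fun v hv => hsub ⟨v, hv, rfl⟩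
    have himgpre : Subtype.val '' ((Subtype.val : {v : V // blk v ∈ C} → V) ⁻¹' s) = s := by
      ext v
      constructor
      · rintro ⟨⟨w, hw⟩, hws, rfl⟩; exact hws
      · intro hv; exact ⟨⟨v, hmem v hv⟩, hv, rfl⟩
    refine ⟨Subtype.val ⁻¹' s, ⟨?_, ?_⟩, himgpre.symm⟩
    · intro v hv w hw hne
      exact hclq hv hw (fun h => hne (Subtype.ext h))
    · intro t' ht' hsub'
      have hkey : s = Subtype.val '' t' := by
        apply hmax
        · rintro x ⟨v, hv, rfl⟩ y ⟨w, hw, rfl⟩ hne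
          exact ht' hv hw (fun h => hne (congrArg _ h))
        · intro v hv
          exact ⟨⟨v, hmem v hv⟩, hsub' hv, rfl⟩
      ext x
      simp only [Set.mem_preimage]
      constructor
      · exact fun h => hsub' h
      · intro hx
        rw [hkey]
        exact ⟨x, hx, rfl⟩
  · rintro ⟨C, ⟨hCclq, hCmax⟩, t, ⟨htclq, htmax⟩, rfl⟩
    have hsclq : G.IsClique (Subtype.val '' t) := by
      rintro x ⟨v, hv, rfl⟩ y ⟨w, hw, rfl⟩ hne
      exact htclq hv hw (fun h => hne (congrArg _ h))
    -- every block of C is represented in t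
    have hrep : ∀ b ∈ C, ∃ v ∈ t, blk (v : V) = b := by
      intro b hb
      by_contra hcon
      push_neg at hcon
      obtain ⟨v0, rfl⟩ := hsurj b
      have hvC : blk v0 ∈ C := hb
      set v : {v : V // blk v ∈ C} := ⟨v0, hvC⟩ with hv
      have hvnot : v ∉ t := fun h => hcon v h rfl
      have hins : (SimpleGraph.induce {v : V | blk v ∈ C} G).IsClique (insert v t) := by
        apply htclq.insert
        intro w hw hne
        have hblk : blk (v : V) ≠ blk (w : V) := fun h => hcon w hw h.symm
        exact hcomp (v : V) (w : V) hblk (hCclq v.2 w.2 hblk)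
      have := htmax (insert v t) hins (Set.subset_insert _ _)
      exact hvnot (this ▸ Set.mem_insert _ _)
    refine ⟨hsclq, ?_⟩
    intro s' hs' hsub'
    have hCimg : C = blk '' s' := by
      apply hCmax _ (himg s' hs')
      intro b hb
      obtain ⟨w, hw, rfl⟩ := hrep b hb
      exact ⟨(w : V), hsub' ⟨w, hw, rfl⟩, rfl⟩
    have hmem' : ∀ w ∈ s', blk w ∈ C := by
      intro w hw; rw [hCimg]; exact ⟨w, hw, rfl⟩
    have ht' : t = Subtype.val ⁻¹' s' := by
      apply htmax
      · intro x hx y hy hne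
        exact hs' hx hy (fun h => hne (Subtype.ext h))
      · intro x hx
        exact hsub' ⟨x, hx, rfl⟩
    ext w
    constructor
    · rintro ⟨x, hx, rfl⟩
      exact hsub' ⟨x, hx, rfl⟩
    · intro hw
      exact ⟨⟨w, hmem' w hw⟩, by rw [ht']; exact hw, rfl⟩
end

section
/- Let G(V,E) be a chordal graph with maximal cliques C₁,…,C_m, and let Z' be a symmetric partially specified real matrix whose entries are specified exactly on positions (i,j) with i=j or (i,j) ∈ E. Then Z' admits a completion Z that is positive semidefinite with rank(Z) ≤ 1 if and only if, for every i ∈ {1,…,m}, the fully specified principal submatrix of Z' indexed by C_i is positive semidefinite and has rank at most 1. -/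
set_option linter.unusedSectionVars false
set_option linter.unusedVariables false
set_option maxHeartbeats 1000000

open Matrix Module

variable {n : Type} [Fintype n] [DecidableEq n]

/-- outer product matrix is PSD -/
lemma outer_posSemidef (x : n → ℝ) : (Matrix.of fun i j => x i * x j : Matrix n n ℝ).PosSemidef := by
  refine posSemidef_iff_dotProduct_mulVec.mpr ⟨?_, ?_⟩
  · ext i j
    simp [Matrix.conjTranspose_apply, mul_comm]
  · intro v
    have : dotProduct (star v) ((Matrix.of fun i j => x i * x j : Matrix n n ℝ) *ᵥ v)
        = (∑ i, x i * v i) * (∑ j, x j * v j) := by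
      simp only [dotProduct, mulVec, star_trivial, Matrix.of_apply]
      rw [Finset.sum_mul]
      congr 1; ext i
      rw [Finset.mul_sum, Finset.mul_sum]
      congr 1; ext j
      ring
    rw [this]
    exact mul_self_nonneg _

/-- outer product matrix has rank ≤ 1 -/
lemma outer_rank_le_one (x : n → ℝ) : (Matrix.of fun i j => x i * x j : Matrix n n ℝ).rank ≤ 1 := by
  have hle : LinearMap.range (Matrix.of fun i j => x i * x j : Matrix n n ℝ).mulVecLin
      ≤ Submodule.span ℝ {x} := by
    rintro v ⟨w, rfl⟩
    have : (Matrix.of fun i j => x i * x j : Matrix n n ℝ).mulVecLin w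
        = (∑ j, x j * w j) • x := by
      ext i
      simp only [mulVecLin_apply, mulVec, dotProduct, Matrix.of_apply, Pi.smul_apply,
        smul_eq_mul, Finset.sum_mul]
      congr 1; ext j; ring
    rw [this]
    exact Submodule.smul_mem _ _ (Submodule.mem_span_singleton_self x)
  have := Submodule.finrank_mono hle
  refine le_trans this ?_
  by_cases hx : x = 0
  · subst hx
    rw [Submodule.span_zero_singleton]
    simp
  · rw [finrank_span_singleton hx]


open Matrix Module

variable {n : Type} [Fintype n] [DecidableEq n]

lemma psd_symm_apply {M : Matrix n n ℝ} (h : M.PosSemidef) (i j : n) : M j i = M i j := by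
  have := h.1.apply i j
  simpa using this

lemma psd_form {M : Matrix n n ℝ} (h : M.PosSemidef) (i j : n) (a b : ℝ) (hij : i ≠ j) :
    0 ≤ a * a * M i i + a * b * (M i j + M j i) + b * b * M j j := by
  have h2 := h.dotProduct_mulVec_nonneg (Pi.single i a + Pi.single j b)
  rw [star_trivial, mulVec_add, dotProduct_add, add_dotProduct, add_dotProduct,
    mulVec_single, mulVec_single] at h2
  simp only [dotProduct, Pi.single_apply, ite_mul, zero_mul, Finset.sum_ite_eq',
    Finset.mem_univ, if_true, Pi.smul_apply, MulOpposite.smul_eq_mul_unop,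
    MulOpposite.unop_op, Matrix.col_apply] at h2
  -- h2 should now be some arrangement
  linarith

lemma psd_diag_nonneg {M : Matrix n n ℝ} (h : M.PosSemidef) (i : n) : 0 ≤ M i i := by
  have h2 := h.dotProduct_mulVec_nonneg (Pi.single i 1)
  rw [star_trivial, mulVec_single] at h2
  simpa [dotProduct, Pi.single_apply] using h2

lemma psd_rank_one_decomp (M : Matrix n n ℝ) (h : M.PosSemidef) (hr : M.rank ≤ 1) :
    ∃ x : n → ℝ, ∀ i j, M i j = x i * x j := by
  by_cases hdiag : ∀ k, M k k = 0
  · refine ⟨0, fun i j => ?_⟩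
    simp only [Pi.zero_apply, mul_zero]
    by_cases hij : i = j
    · subst hij; exact hdiag i
    · have h1 := psd_form h i j 1 1 hij
      have h2 := psd_form h i j 1 (-1) hij
      have hs := psd_symm_apply h i j
      rw [hdiag i, hdiag j] at h1 h2
      nlinarith [h1, h2]
  · push_neg at hdiag
    obtain ⟨k, hk⟩ := hdiag
    have hkpos : 0 < M k k := lt_of_le_of_ne (psd_diag_nonneg h k) (Ne.symm hk)
    -- columns are multiples of column k
    have hcolk : (fun i => M i k) ∈ LinearMap.range M.mulVecLin := by
      refine ⟨Pi.single k 1, ?_⟩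
      rw [mulVecLin_apply, mulVec_single]
      simp
      rfl
    have hcolkne : (fun i => M i k) ≠ 0 := by
      intro h0
      exact hk (by simpa using congrFun h0 k)
    have hspan : Submodule.span ℝ {(fun i => M i k : n → ℝ)} = LinearMap.range M.mulVecLin := by
      apply Submodule.eq_of_le_of_finrank_le
      · rw [Submodule.span_le, Set.singleton_subset_iff]; exact hcolk
      · rw [finrank_span_singleton hcolkne]; exact hr
    have hcol : ∀ j, ∃ c : ℝ, (fun i => M i j) = c • (fun i => M i k : n → ℝ) := by
      intro j
      have : (fun i => M i j) ∈ LinearMap.range M.mulVecLin := by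
        refine ⟨Pi.single j 1, ?_⟩
        rw [mulVecLin_apply, mulVec_single]
        simp
        rfl
      rw [← hspan, Submodule.mem_span_singleton] at this
      obtain ⟨c, hc⟩ := this
      exact ⟨c, hc.symm⟩
    refine ⟨fun i => M i k / Real.sqrt (M k k), fun i j => ?_⟩
    obtain ⟨c, hc⟩ := hcol j
    have hij : M i j = c * M i k := by simpa using congrFun hc i
    have hkj : M k j = c * M k k := by simpa using congrFun hc k
    have hjk : M j k = M k j := psd_symm_apply h k j
    have hsq : Real.sqrt (M k k) * Real.sqrt (M k k) = M k k :=
      Real.mul_self_sqrt (le_of_lt hkpos)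
    field_simp
    rw [hij, hjk, hkj]
    ring_nf
    rw [Real.sq_sqrt hkpos.le]


open Matrix Module


variable {V : Type} [Fintype V] [DecidableEq V]

lemma exists_max_clique (G : SimpleGraph V) (s : Finset V) (hs : G.IsClique ↑s) :
    ∃ t : Finset V, s ⊆ t ∧ IsMaxClq G ↑t := by
  classical
  let C : Finset (Finset V) := Finset.univ.filter (fun t => G.IsClique ↑t ∧ s ⊆ t)
  have hsC : s ∈ C := by simp [C, hs]
  obtain ⟨t, htC, hmax⟩ := C.exists_max_image Finset.card ⟨s, hsC⟩
  simp only [C, Finset.mem_filter, Finset.mem_univ, true_and] at htC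
  refine ⟨t, htC.2, htC.1, fun u hu hsub => ?_⟩
  by_contra hne
  have : ∃ x, x ∈ u ∧ x ∉ (↑t : Set V) := by
    by_contra h
    push_neg at h
    exact hne (Set.Subset.antisymm hsub h)
  obtain ⟨x, hxu, hxt⟩ := this
  have hxt' : x ∉ t := by simpa using hxt
  have hins : G.IsClique ↑(insert x t) := by
    have : (↑(insert x t) : Set V) ⊆ u := by
      rw [Finset.coe_insert]
      exact Set.insert_subset hxu hsub
    exact hu.subset this
  have hmem : insert x t ∈ C := by
    simp only [C, Finset.mem_filter, Finset.mem_univ, true_and]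
    exact ⟨hins, htC.2.trans (Finset.subset_insert x t)⟩
  have := hmax _ hmem
  rw [Finset.card_insert_of_notMem hxt'] at this
  omega

section Facts
variable (G : SimpleGraph V) (Z' : Matrix V V ℝ)

lemma clique_decomp
    (hR : ∀ s : Finset V, IsMaxClq G (↑s : Set V) →
        (Z'.submatrix (fun i : s => (i : V)) (fun j : s => (j : V))).PosSemidef ∧
        (Z'.submatrix (fun i : s => (i : V)) (fun j : s => (j : V))).rank ≤ 1)
    (s : Finset V) (hs : G.IsClique ↑s) :
    ∃ y : V → ℝ, ∀ i ∈ s, ∀ j ∈ s, Z' i j = y i * y j := by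
  classical
  obtain ⟨t, hst, htmax⟩ := exists_max_clique G s hs
  obtain ⟨hpsd, hrank⟩ := hR t htmax
  obtain ⟨x, hx⟩ := psd_rank_one_decomp _ hpsd hrank
  refine ⟨fun i => if h : i ∈ t then x ⟨i, h⟩ else 0, fun i hi j hj => ?_⟩
  have hit : i ∈ t := hst hi
  have hjt : j ∈ t := hst hj
  simp only [dif_pos hit, dif_pos hjt]
  exact hx ⟨i, hit⟩ ⟨j, hjt⟩

lemma clique_pair_finset {i j : V} (h : G.Adj i j) : G.IsClique (↑({i, j} : Finset V) : Set V) := by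
  rw [Finset.coe_insert, Finset.coe_singleton]
  exact SimpleGraph.isClique_pair.mpr fun _ => h

lemma clique_triple_finset {i j k : V} (hij : G.Adj i j) (hjk : G.Adj j k) (hik : G.Adj i k) :
    G.IsClique (↑({i, j, k} : Finset V) : Set V) := by
  rw [Finset.coe_insert, Finset.coe_insert, Finset.coe_singleton]
  rw [SimpleGraph.isClique_insert]
  refine ⟨SimpleGraph.isClique_pair.mpr fun _ => hjk, ?_⟩
  intro b hb _
  rcases Set.mem_insert_iff.mp hb with rfl | hb
  · exact hij
  · rw [Set.mem_singleton_iff] at hb; subst hb; exact hik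

end Facts


open Matrix Module Finset


section Chains

variable {V : Type} (G : SimpleGraph V) (P : V → Prop) (σ : V → V → ℝ)

/-- chain in the subgraph induced on vertices satisfying `P` -/
def IsChn (g : ℕ → V) (n : ℕ) : Prop :=
  ∀ k < n, G.Adj (g k) (g (k + 1)) ∧ P (g k) ∧ P (g (k + 1))

noncomputable def csgn (g : ℕ → V) (n : ℕ) : ℝ :=
  ∏ k ∈ Finset.range n, σ (g k) (g (k + 1))

variable {G P σ}

lemma IsChn.vertexP {g : ℕ → V} {n : ℕ} (h : IsChn G P g n) (hn : 1 ≤ n) {k : ℕ} (hk : k ≤ n) :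
    P (g k) := by
  rcases lt_or_eq_of_le hk with hlt | rfl
  · exact (h k hlt).2.1
  · have := (h (k - 1) (by omega)).2.2
    have hk1 : k - 1 + 1 = k := by omega
    rwa [hk1] at this

lemma csgn_sq {g : ℕ → V} {n : ℕ} (hσsq : ∀ i j, G.Adj i j → P i → P j → σ i j * σ i j = 1)
    (h : IsChn G P g n) : csgn σ g n * csgn σ g n = 1 := by
  rw [csgn, ← Finset.prod_mul_distrib]
  apply Finset.prod_eq_one
  intro k hk
  rw [Finset.mem_range] at hk
  obtain ⟨ha, hp, hq⟩ := h k hk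
  exact hσsq _ _ ha hp hq

lemma csgn_ne_zero {g : ℕ → V} {n : ℕ}
    (hσsq : ∀ i j, G.Adj i j → P i → P j → σ i j * σ i j = 1)
    (h : IsChn G P g n) : csgn σ g n ≠ 0 := by
  intro h0
  have := csgn_sq hσsq h
  rw [h0, zero_mul] at this
  exact zero_ne_one this

/-- splitting the product of a chain sign -/
lemma csgn_split (g : ℕ → V) (b m : ℕ) :
    csgn σ g (b + m) = csgn σ g b * ∏ k ∈ Finset.range m, σ (g (b + k)) (g (b + k + 1)) := by
  rw [csgn, csgn, Finset.prod_range_add]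

end Chains

section Chains2

variable {V : Type} {G : SimpleGraph V} {P : V → Prop} {σ : V → V → ℝ}

lemma split_eq (g : ℕ → V) (n a b : ℕ) (hab : a < b) (hbn : b < n)
    (hchain : IsChn G P g n) (heq : g a = g b) :
    ∃ g1 g2 : ℕ → V, IsChn G P g1 (n - (b - a)) ∧ g1 0 = g 0 ∧ g1 (n - (b - a)) = g n ∧
      IsChn G P g2 (b - a) ∧ g2 0 = g a ∧ g2 (b - a) = g b ∧
      csgn σ g1 (n - (b - a)) * csgn σ g2 (b - a) = csgn σ g n := by
  refine ⟨fun k => if k ≤ a then g k else g (k + (b - a)), fun k => g (a + k), ?_, ?_, ?_, ?_, ?_, ?_, ?_⟩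
  · -- IsChn g1
    intro k hk
    by_cases h1 : k + 1 ≤ a
    · simp only [if_pos (by omega : k ≤ a), if_pos h1]
      exact hchain k (by omega)
    · by_cases h2 : k ≤ a
      · -- k = a
        have hka : k = a := by omega
        simp only [if_pos h2, if_neg h1]
        have e1 : k + 1 + (b - a) = b + 1 := by omega
        rw [e1, hka, heq]
        exact hchain b (by omega)
      · simp only [if_neg h2, if_neg (by omega : ¬ k + 1 ≤ a)]
        have e1 : k + 1 + (b - a) = k + (b - a) + 1 := by omega
        rw [e1]
        exact hchain (k + (b - a)) (by omega)
  · simp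
  · have : ¬ n - (b - a) ≤ a := by omega
    simp only [if_neg this]
    congr 1
    omega
  · -- IsChn g2
    intro k hk
    have e1 : a + (k + 1) = a + k + 1 := by omega
    dsimp only
    rw [e1]
    exact hchain (a + k) (by omega)
  · simp
  · show g (a + (b - a)) = g b
    congr 1
    omega
  · -- csgn equality
    have hB : csgn σ (fun k => g (a + k)) (b - a) = ∏ k ∈ Finset.range (b - a), σ (g (a + k)) (g (a + k + 1)) := by
      rw [csgn]
      exact Finset.prod_congr rfl fun k _ => rfl
    have e1 : csgn σ g n = csgn σ g b *
        ∏ k ∈ Finset.range (n - b), σ (g (b + k)) (g (b + k + 1)) := by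
      have := csgn_split (σ := σ) g b (n - b)
      rwa [show b + (n - b) = n by omega] at this
    have e2 : csgn σ g b = csgn σ g a * ∏ k ∈ Finset.range (b - a), σ (g (a + k)) (g (a + k + 1)) := by
      have := csgn_split (σ := σ) g a (b - a)
      rwa [show a + (b - a) = b by omega] at this
    have e3 : csgn σ (fun k => if k ≤ a then g k else g (k + (b - a))) (n - (b - a))
        = csgn σ g a * ∏ k ∈ Finset.range (n - b), σ (g (b + k)) (g (b + k + 1)) := by
      have := csgn_split (σ := σ) (fun k => if k ≤ a then g k else g (k + (b - a))) a (n - b)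
      rw [show a + (n - b) = n - (b - a) by omega] at this
      rw [this]
      congr 1
      · rw [csgn, csgn]
        apply Finset.prod_congr rfl
        intro k hk
        rw [Finset.mem_range] at hk
        simp only [if_pos (by omega : k ≤ a), if_pos (by omega : k + 1 ≤ a)]
      · apply Finset.prod_congr rfl
        intro k hk
        rw [Finset.mem_range] at hk
        by_cases hk0 : k = 0
        · subst hk0
          simp only [Nat.add_zero]
          rw [if_pos le_rfl, if_neg (by omega : ¬ a + 1 ≤ a), heq,
            show a + 1 + (b - a) = b + 1 by omega]
        · simp only [if_neg (by omega : ¬ a + k ≤ a), if_neg (by omega : ¬ a + k + 1 ≤ a)]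
          rw [show a + k + (b - a) = b + k by omega, show a + k + 1 + (b - a) = b + k + 1 by omega]
    rw [e1, e2, e3, hB]
    ring

lemma split_chord (g : ℕ → V) (n a b : ℕ) (hab : a + 2 ≤ b) (hbn : b < n)
    (hchain : IsChn G P g n) (hadj : G.Adj (g a) (g b)) (hPa : P (g a)) (hPb : P (g b))
    (hσsymm : ∀ i j, σ i j = σ j i)
    (hσsq : ∀ i j, G.Adj i j → P i → P j → σ i j * σ i j = 1) :
    ∃ g1 g2 : ℕ → V, IsChn G P g1 (n - b + a + 1) ∧ g1 0 = g 0 ∧ g1 (n - b + a + 1) = g n ∧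
      IsChn G P g2 (b - a + 1) ∧ g2 0 = g a ∧ g2 (b - a + 1) = g a ∧
      csgn σ g1 (n - b + a + 1) * csgn σ g2 (b - a + 1) = csgn σ g n := by
  refine ⟨fun k => if k ≤ a then g k else g (k + (b - a - 1)),
    fun k => if k ≤ b - a then g (a + k) else g a, ?_, ?_, ?_, ?_, ?_, ?_, ?_⟩
  · -- IsChn g1
    intro k hk
    by_cases h1 : k + 1 ≤ a
    · simp only [if_pos (by omega : k ≤ a), if_pos h1]
      exact hchain k (by omega)
    · by_cases h2 : k ≤ a
      · have hka : k = a := by omega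
        simp only [if_pos h2, if_neg h1]
        rw [show k + 1 + (b - a - 1) = b by omega, hka]
        exact ⟨hadj, hPa, hPb⟩
      · simp only [if_neg h2, if_neg (by omega : ¬ k + 1 ≤ a)]
        rw [show k + 1 + (b - a - 1) = k + (b - a - 1) + 1 by omega]
        exact hchain (k + (b - a - 1)) (by omega)
  · simp
  · show (if n - b + a + 1 ≤ a then g (n - b + a + 1) else g (n - b + a + 1 + (b - a - 1))) = g n
    rw [if_neg (by omega : ¬ n - b + a + 1 ≤ a), show n - b + a + 1 + (b - a - 1) = n by omega]
  · -- IsChn g2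
    intro k hk
    by_cases h1 : k + 1 ≤ b - a
    · simp only [if_pos (by omega : k ≤ b - a), if_pos h1]
      rw [show a + (k + 1) = a + k + 1 by omega]
      exact hchain (a + k) (by omega)
    · have hka : k = b - a := by omega
      simp only [if_pos (by omega : k ≤ b - a), if_neg h1]
      rw [hka, show a + (b - a) = b by omega]
      exact ⟨hadj.symm, hPb, hPa⟩
  · simp
  · show (if b - a + 1 ≤ b - a then g (a + (b - a + 1)) else g a) = g a
    rw [if_neg (by omega : ¬ b - a + 1 ≤ b - a)]
  · -- csgn equality
    have e1 : csgn σ g n = csgn σ g b *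
        ∏ k ∈ Finset.range (n - b), σ (g (b + k)) (g (b + k + 1)) := by
      have := csgn_split (σ := σ) g b (n - b)
      rwa [show b + (n - b) = n by omega] at this
    have e2 : csgn σ g b = csgn σ g a * ∏ k ∈ Finset.range (b - a), σ (g (a + k)) (g (a + k + 1)) := by
      have := csgn_split (σ := σ) g a (b - a)
      rwa [show a + (b - a) = b by omega] at this
    have e3 : csgn σ (fun k => if k ≤ a then g k else g (k + (b - a - 1))) (n - b + a + 1)
        = (csgn σ g a * σ (g a) (g b)) *
          ∏ k ∈ Finset.range (n - b), σ (g (b + k)) (g (b + k + 1)) := by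
      have := csgn_split (σ := σ) (fun k => if k ≤ a then g k else g (k + (b - a - 1)))
        (a + 1) (n - b)
      rw [show a + 1 + (n - b) = n - b + a + 1 by omega] at this
      rw [this]
      congr 1
      · rw [csgn, Finset.prod_range_succ, csgn]
        congr 1
        · apply Finset.prod_congr rfl
          intro k hk
          rw [Finset.mem_range] at hk
          simp only [if_pos (by omega : k ≤ a), if_pos (by omega : k + 1 ≤ a)]
        · rw [if_pos le_rfl, if_neg (by omega : ¬ a + 1 ≤ a),
            show a + 1 + (b - a - 1) = b by omega]
      · apply Finset.prod_congr rfl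
        intro k hk
        rw [Finset.mem_range] at hk
        simp only [if_neg (by omega : ¬ a + 1 + k ≤ a), if_neg (by omega : ¬ a + 1 + k + 1 ≤ a)]
        rw [show a + 1 + k + (b - a - 1) = b + k by omega,
          show a + 1 + k + 1 + (b - a - 1) = b + k + 1 by omega]
    have e4 : csgn σ (fun k => if k ≤ b - a then g (a + k) else g a) (b - a + 1)
        = (∏ k ∈ Finset.range (b - a), σ (g (a + k)) (g (a + k + 1))) * σ (g b) (g a) := by
      rw [csgn, Finset.prod_range_succ]
      congr 1
      · apply Finset.prod_congr rfl
        intro k hk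
        rw [Finset.mem_range] at hk
        simp only [if_pos (by omega : k ≤ b - a), if_pos (by omega : k + 1 ≤ b - a)]
        rw [show a + (k + 1) = a + k + 1 by omega]
      · rw [if_pos le_rfl, if_neg (by omega : ¬ b - a + 1 ≤ b - a),
          show a + (b - a) = b by omega]
    rw [e1, e2, e3, e4]
    have hs : σ (g b) (g a) = σ (g a) (g b) := hσsymm _ _
    rw [hs]
    have hsq := hσsq _ _ hadj hPa hPb
    linear_combination (csgn σ g a * (∏ k ∈ Finset.range (b - a), σ (g (a + k)) (g (a + k + 1))) *
      ∏ k ∈ Finset.range (n - b), σ (g (b + k)) (g (b + k + 1))) * hsq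

lemma csgn_closed (hG : IsChordal G)
    (hσsymm : ∀ i j, σ i j = σ j i)
    (hσsq : ∀ i j, G.Adj i j → P i → P j → σ i j * σ i j = 1)
    (hσtri : ∀ i j k, G.Adj i j → G.Adj j k → G.Adj i k → P i → P j → P k →
      σ i j * σ j k * σ i k = 1)
    (n : ℕ) :
    ∀ g : ℕ → V, IsChn G P g n → g n = g 0 → csgn σ g n = 1 := by
  induction n using Nat.strong_induction_on with
  | _ n ih =>
  intro g hchain hcl
  rcases Nat.lt_or_ge n 4 with h4 | h4
  · interval_cases n
    · simp [csgn]
    · have := (hchain 0 (by omega)).1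
      rw [hcl] at this
      exact (G.irrefl this).elim
    · rw [csgn, Finset.prod_range_succ, Finset.prod_range_one, hcl,
        hσsymm (g 1) (g 0)]
      obtain ⟨ha, hp, hq⟩ := hchain 0 (by omega)
      exact hσsq _ _ ha hp hq
    · rw [csgn, Finset.prod_range_succ, Finset.prod_range_succ, Finset.prod_range_one, hcl,
        hσsymm (g 2) (g 0)]
      obtain ⟨h01, hp0, hp1⟩ := hchain 0 (by omega)
      obtain ⟨h12, _, hp2⟩ := hchain 1 (by omega)
      obtain ⟨h23, _, _⟩ := hchain 2 (by omega)
      rw [hcl] at h23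
      exact hσtri _ _ _ h01 h12 h23.symm hp0 hp1 hp2
  · haveI : NeZero n := ⟨by omega⟩
    haveI : Fact (1 < n) := ⟨by omega⟩
    by_cases hinj : ∀ p q, p < n → q < n → g p = g q → p = q
    · -- injective case: extract a chord
      have hfinj : Function.Injective (fun k : ZMod n => g k.val) := by
        intro i j hij
        exact ZMod.val_injective n (hinj i.val j.val (ZMod.val_lt i) (ZMod.val_lt j) hij)
      have hadjf : ∀ i : ZMod n, G.Adj (g i.val) (g ((i + 1).val)) := by
        intro i
        have hv : (i + 1).val = (i.val + 1) % n := by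
          rw [ZMod.val_add, ZMod.val_one]
        by_cases hend : i.val + 1 < n
        · rw [hv, Nat.mod_eq_of_lt hend]
          exact (hchain i.val (by omega)).1
        · have hival : i.val = n - 1 := by have := ZMod.val_lt i; omega
          rw [hv, hival, show n - 1 + 1 = n by omega, Nat.mod_self, ← hcl]
          have := (hchain (n - 1) (by omega)).1
          rwa [show n - 1 + 1 = n by omega] at this
      obtain ⟨i, j, hij, hji1, hij1, hadj⟩ := hG n h4 (fun k : ZMod n => g k.val) hfinj hadjf
      have claim : ∀ i j : ZMod n, j ≠ i + 1 → i ≠ j + 1 → G.Adj (g i.val) (g j.val) →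
          i.val < j.val → csgn σ g n = 1 := by
        intro i j hji1 hij1 hadj hab
        have hb : j.val < n := ZMod.val_lt j
        have hb2 : i.val + 2 ≤ j.val := by
          by_contra hcon
          apply hji1
          apply ZMod.val_injective n
          rw [ZMod.val_add, ZMod.val_one, Nat.mod_eq_of_lt (by omega)]
          omega
        have hnotend : ¬(i.val = 0 ∧ j.val = n - 1) := by
          rintro ⟨ha0, hbn1⟩
          apply hij1
          apply ZMod.val_injective n
          rw [ZMod.val_add, ZMod.val_one, hbn1, show n - 1 + 1 = n by omega, Nat.mod_self, ha0]
        have hPa : P (g i.val) := (hchain i.val (by omega)).2.1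
        have hPb : P (g j.val) := (hchain j.val hb).2.1
        obtain ⟨g1, g2, hc1, h10, h1n, hc2, h20, h2n, hmul⟩ :=
          split_chord (σ := σ) g n i.val j.val hb2 hb hchain hadj hPa hPb hσsymm hσsq
        have r1 := ih (n - j.val + i.val + 1) (by omega) g1 hc1 (by rw [h1n, hcl, h10])
        have r2 := ih (j.val - i.val + 1) (by omega) g2 hc2 (by rw [h2n, h20])
        rw [← hmul, r1, r2, mul_one]
      rcases lt_trichotomy i.val j.val with h | h | h
      · exact claim i j hji1 hij1 hadj h
      · exact absurd (ZMod.val_injective n h) hij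
      · exact claim j i hij1 hji1 hadj.symm h
    · -- non-injective case
      push_neg at hinj
      obtain ⟨p, q, hp, hq, heq, hne⟩ := hinj
      have claim : ∀ a b : ℕ, a < b → b < n → g a = g b → csgn σ g n = 1 := by
        intro a b hab hbn heq
        obtain ⟨g1, g2, hc1, h10, h1n, hc2, h20, h2n, hmul⟩ :=
          split_eq (σ := σ) g n a b hab hbn hchain heq
        have r1 := ih (n - (b - a)) (by omega) g1 hc1 (by rw [h1n, hcl, h10])
        have r2 := ih (b - a) (by omega) g2 hc2 (by rw [h2n, h20, heq])
        rw [← hmul, r1, r2, mul_one]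
      rcases lt_trichotomy p q with h | h | h
      · exact claim p q h hq heq
      · exact absurd h hne
      · exact claim q p h hp heq.symm

lemma chain_concat {g h : ℕ → V} {n m : ℕ} (hcg : IsChn G P g n) (hch : IsChn G P h m)
    (hglue : g n = h 0) :
    IsChn G P (fun k => if k ≤ n then g k else h (k - n)) (n + m) ∧
    (fun k => if k ≤ n then g k else h (k - n)) 0 = g 0 ∧
    (fun k => if k ≤ n then g k else h (k - n)) (n + m) = h m ∧
    csgn σ (fun k => if k ≤ n then g k else h (k - n)) (n + m) = csgn σ g n * csgn σ h m := by
  refine ⟨?_, ?_, ?_, ?_⟩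
  · intro k hk
    by_cases h1 : k + 1 ≤ n
    · simp only [if_pos (by omega : k ≤ n), if_pos h1]
      exact hcg k (by omega)
    · by_cases h2 : k ≤ n
      · have hkn : k = n := by omega
        simp only [if_pos h2, if_neg h1]
        rw [hkn, show n + 1 - n = 1 by omega, hglue]
        exact hch 0 (by omega)
      · simp only [if_neg h2, if_neg (by omega : ¬ k + 1 ≤ n)]
        rw [show k + 1 - n = k - n + 1 by omega]
        exact hch (k - n) (by omega)
  · simp
  · by_cases hm : m = 0
    · subst hm
      simp only [Nat.add_zero, if_pos le_rfl]
      rw [hglue]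
    · show (if n + m ≤ n then g (n + m) else h (n + m - n)) = h m
      rw [if_neg (by omega : ¬ n + m ≤ n), show n + m - n = m by omega]
  · have := csgn_split (σ := σ) (fun k => if k ≤ n then g k else h (k - n)) n m
    rw [this]
    congr 1
    · rw [csgn, csgn]
      apply Finset.prod_congr rfl
      intro k hk
      rw [Finset.mem_range] at hk
      simp only [if_pos (by omega : k ≤ n), if_pos (by omega : k + 1 ≤ n)]
    · rw [csgn]
      apply Finset.prod_congr rfl
      intro k hk
      rw [Finset.mem_range] at hk
      by_cases hk0 : k = 0
      · subst hk0
        simp only [Nat.add_zero, if_pos le_rfl, if_neg (by omega : ¬ n + 0 + 1 ≤ n)]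
        rw [hglue, show n + 0 + 1 - n = 1 by omega]
      · simp only [if_neg (by omega : ¬ n + k ≤ n), if_neg (by omega : ¬ n + k + 1 ≤ n)]
        rw [show n + k - n = k by omega, show n + k + 1 - n = k + 1 by omega]

lemma chain_rev (hσsymm : ∀ i j, σ i j = σ j i) {g : ℕ → V} {n : ℕ} (hcg : IsChn G P g n) :
    IsChn G P (fun k => g (n - k)) n ∧ csgn σ (fun k => g (n - k)) n = csgn σ g n := by
  constructor
  · intro k hk
    have e1 : n - k = n - (k + 1) + 1 := by omega
    have := hcg (n - (k + 1)) (by omega)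
    refine ⟨?_, ?_, ?_⟩
    · show G.Adj (g (n - k)) (g (n - (k + 1)))
      rw [e1]
      exact this.1.symm
    · show P (g (n - k))
      rw [e1]
      exact this.2.2
    · show P (g (n - (k + 1)))
      exact this.2.1
  · rw [csgn, csgn]
    conv_rhs => rw [← Finset.prod_range_reflect (fun j => σ (g j) (g (j + 1))) n]
    apply Finset.prod_congr rfl
    intro k hk
    rw [Finset.mem_range] at hk
    rw [hσsymm (g (n - k)) (g (n - (k + 1))),
      show n - (k + 1) = n - 1 - k by omega, show n - k = n - 1 - k + 1 by omega]

lemma csgn_unique (hG : IsChordal G)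
    (hσsymm : ∀ i j, σ i j = σ j i)
    (hσsq : ∀ i j, G.Adj i j → P i → P j → σ i j * σ i j = 1)
    (hσtri : ∀ i j k, G.Adj i j → G.Adj j k → G.Adj i k → P i → P j → P k →
      σ i j * σ j k * σ i k = 1)
    {g h : ℕ → V} {n m : ℕ} (hcg : IsChn G P g n) (hch : IsChn G P h m)
    (h0 : g 0 = h 0) (h1 : g n = h m) :
    csgn σ g n = csgn σ h m := by
  obtain ⟨hrc, hrs⟩ := chain_rev (σ := σ) hσsymm hch
  have hglue : g n = (fun k => h (m - k)) 0 := by simpa using h1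
  obtain ⟨hcc, hc0, hcend, hcs⟩ := chain_concat (σ := σ) hcg hrc hglue
  have hclosed : (fun k => if k ≤ n then g k else h (m - (k - n))) (n + m)
      = (fun k => if k ≤ n then g k else h (m - (k - n))) 0 := by
    have := hcend
    simp only at this ⊢
    rw [this, show m - m = 0 by omega]
    simp [h0]
  have hone := csgn_closed (σ := σ) hG hσsymm hσsq hσtri (n + m) _ hcc hclosed
  rw [hcs, hrs] at hone
  have hh2 := csgn_sq (σ := σ) hσsq hch
  calc csgn σ g n = csgn σ g n * (csgn σ h m * csgn σ h m) := by rw [hh2, mul_one]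
    _ = (csgn σ g n * csgn σ h m) * csgn σ h m := by ring
    _ = csgn σ h m := by rw [hone, one_mul]

end Chains2


/-- rank-1 PSD completion on a chordal pattern.  The partially specified
symmetric matrix `Z'` (specified on the diagonal and on edges of the chordal graph `G`)
admits a positive semidefinite completion of rank at most 1 iff every principal submatrix
indexed by a maximal clique of `G` is positive semidefinite of rank at most 1. -/
theorem stmt2 {V : Type} [Fintype V] [DecidableEq V]
    (G : SimpleGraph V) (hG : IsChordal G)
    (Z' : Matrix V V ℝ) (hsymm : Z'.IsSymm) :
    (∃ Z : Matrix V V ℝ, Z.PosSemidef ∧ Z.rank ≤ 1 ∧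
        (∀ i, Z i i = Z' i i) ∧ (∀ i j, G.Adj i j → Z i j = Z' i j)) ↔
      (∀ s : Finset V, IsMaxClq G (↑s : Set V) →
        (Z'.submatrix (fun i : s => (i : V)) (fun j : s => (j : V))).PosSemidef ∧
        (Z'.submatrix (fun i : s => (i : V)) (fun j : s => (j : V))).rank ≤ 1) := by
  classical
  have hZs : ∀ i j, Z' j i = Z' i j := by
    intro i j
    rw [← Matrix.transpose_apply Z' i j, hsymm.eq]
  constructor
  · rintro ⟨Z, hpsd, hrank, hdiag, hedge⟩ s hs
    obtain ⟨x, hx⟩ := psd_rank_one_decomp Z hpsd hrank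
    have hsub : Z'.submatrix (fun i : s => (i : V)) (fun j : s => (j : V))
        = Matrix.of (fun i j : s => x i * x j) := by
      ext i j
      simp only [Matrix.submatrix_apply, Matrix.of_apply]
      by_cases hij : (i : V) = (j : V)
      · rw [hij, ← hdiag, hx]
      · have hadj : G.Adj ↑i ↑j := hs.1 (Finset.mem_coe.mpr i.2) (Finset.mem_coe.mpr j.2) hij
        rw [← hedge _ _ hadj, hx]
    rw [hsub]
    exact ⟨outer_posSemidef _, outer_rank_le_one _⟩
  · intro hR
    have hdec := clique_decomp G Z' hR
    have hd0 : ∀ i, 0 ≤ Z' i i := by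
      intro i
      obtain ⟨y, hy⟩ := hdec {i} (by
        rw [Finset.coe_singleton]; exact G.isClique_singleton i)
      rw [hy i (Finset.mem_singleton_self i) i (Finset.mem_singleton_self i)]
      exact mul_self_nonneg _
    have hE : ∀ i j, G.Adj i j → Z' i j ^ 2 = Z' i i * Z' j j := by
      intro i j hadj
      obtain ⟨y, hy⟩ := hdec {i, j} (clique_pair_finset G hadj)
      have hi : i ∈ ({i, j} : Finset V) := by simp
      have hj : j ∈ ({i, j} : Finset V) := by simp
      rw [hy i hi j hj, hy i hi i hi, hy j hj j hj]
      ring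
    have hT : ∀ i j k, G.Adj i j → G.Adj j k → G.Adj i k →
        Z' i j * Z' j k * Z' i k = Z' i i * Z' j j * Z' k k := by
      intro i j k hij hjk hik
      obtain ⟨y, hy⟩ := hdec {i, j, k} (clique_triple_finset G hij hjk hik)
      have hi : i ∈ ({i, j, k} : Finset V) := by simp
      have hj : j ∈ ({i, j, k} : Finset V) := by simp
      have hk : k ∈ ({i, j, k} : Finset V) := by simp
      rw [hy i hi j hj, hy j hj k hk, hy i hi k hk,
        hy i hi i hi, hy j hj j hj, hy k hk k hk]
      ring
    -- sign function
    set σ : V → V → ℝ := fun i j => Z' i j / (Real.sqrt (Z' i i) * Real.sqrt (Z' j j))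
      with hσdef
    set P : V → Prop := fun i => Z' i i ≠ 0 with hPdef
    have hσsymm : ∀ i j, σ i j = σ j i := by
      intro i j
      rw [hσdef]
      dsimp only
      rw [hZs i j, mul_comm]
    have hσsq : ∀ i j, G.Adj i j → P i → P j → σ i j * σ i j = 1 := by
      intro i j hadj hi hj
      have h1 : 0 < Z' i i := lt_of_le_of_ne (hd0 i) (Ne.symm hi)
      have h2 : 0 < Z' j j := lt_of_le_of_ne (hd0 j) (Ne.symm hj)
      have hs1 : Real.sqrt (Z' i i) * Real.sqrt (Z' i i) = Z' i i := Real.mul_self_sqrt h1.le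
      have hs2 : Real.sqrt (Z' j j) * Real.sqrt (Z' j j) = Z' j j := Real.mul_self_sqrt h2.le
      have hn1 : Real.sqrt (Z' i i) ≠ 0 := ne_of_gt (Real.sqrt_pos.mpr h1)
      have hn2 : Real.sqrt (Z' j j) ≠ 0 := ne_of_gt (Real.sqrt_pos.mpr h2)
      rw [hσdef]
      dsimp only
      rw [div_mul_div_comm]
      rw [div_eq_one_iff_eq (by positivity)]
      have := hE i j hadj
      nlinarith [this, hs1, hs2]
    have hσtri : ∀ i j k, G.Adj i j → G.Adj j k → G.Adj i k → P i → P j → P k →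
        σ i j * σ j k * σ i k = 1 := by
      intro i j k hij hjk hik hi hj hk
      have h1 : 0 < Z' i i := lt_of_le_of_ne (hd0 i) (Ne.symm hi)
      have h2 : 0 < Z' j j := lt_of_le_of_ne (hd0 j) (Ne.symm hj)
      have h3 : 0 < Z' k k := lt_of_le_of_ne (hd0 k) (Ne.symm hk)
      have hs1 : Real.sqrt (Z' i i) * Real.sqrt (Z' i i) = Z' i i := Real.mul_self_sqrt h1.le
      have hs2 : Real.sqrt (Z' j j) * Real.sqrt (Z' j j) = Z' j j := Real.mul_self_sqrt h2.le
      have hs3 : Real.sqrt (Z' k k) * Real.sqrt (Z' k k) = Z' k k := Real.mul_self_sqrt h3.le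
      rw [hσdef]
      dsimp only
      rw [div_mul_div_comm, div_mul_div_comm]
      rw [div_eq_one_iff_eq (by positivity)]
      have hrhs : Real.sqrt (Z' i i) * Real.sqrt (Z' j j) *
          (Real.sqrt (Z' j j) * Real.sqrt (Z' k k)) *
          (Real.sqrt (Z' i i) * Real.sqrt (Z' k k)) =
          (Real.sqrt (Z' i i) * Real.sqrt (Z' i i)) *
          ((Real.sqrt (Z' j j) * Real.sqrt (Z' j j)) *
          (Real.sqrt (Z' k k) * Real.sqrt (Z' k k))) := by ring
      rw [hrhs, hs1, hs2, hs3, hT i j k hij hjk hik]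
      ring
    -- equivalence relation by chains
    set r : V → V → Prop := fun i j => ∃ n g, IsChn G P g n ∧ g 0 = i ∧ g n = j with hrdef
    have hrefl : ∀ i, r i i := fun i =>
      ⟨0, fun _ => i, fun k hk => absurd hk (by omega), rfl, rfl⟩
    have hsymmr : ∀ {i j}, r i j → r j i := by
      rintro i j ⟨n, g, hc, h0, h1⟩
      refine ⟨n, fun k => g (n - k), (chain_rev (σ := σ) hσsymm hc).1, by simpa using h1, ?_⟩
      show g (n - n) = i
      rw [Nat.sub_self]
      exact h0
    have htrans : ∀ {i j k}, r i j → r j k → r i k := by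
      rintro i j k ⟨n, g, hcg, hg0, hg1⟩ ⟨m, h, hch, hh0, hh1⟩
      obtain ⟨hcc, hc0, hc1, _⟩ := chain_concat (σ := σ) hcg hch (by rw [hg1, hh0])
      exact ⟨n + m, _, hcc, by simpa using hc0.trans hg0, by simpa using hc1.trans hh1⟩
    let st : Setoid V := ⟨r, fun i => hrefl i, fun h => hsymmr h, fun h1 h2 => htrans h1 h2⟩
    have hrep : ∀ i, r (Quotient.out (Quotient.mk st i)) i := by
      intro i
      have := Quotient.out_eq (Quotient.mk st i)
      exact Quotient.exact (s := st) this
    choose cn cg hcchain hc0 hc1 using hrep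
    -- sign of a vertex
    obtain ⟨ε, hεsq, hkey⟩ : ∃ ε : V → ℝ, (∀ i, ε i * ε i = 1) ∧
        (∀ i j, G.Adj i j → P i → P j → ε i * ε j = σ i j) := by
      refine ⟨fun i => csgn σ (cg i) (cn i), fun i => csgn_sq hσsq (hcchain i), ?_⟩
      intro i j hadj hi hj
      have hce : IsChn G P (fun k => if k = 0 then i else j) 1 := by
        intro k hk
        have hk0 : k = 0 := by omega
        subst hk0
        simp only [if_pos rfl, if_neg (by omega : ¬ (0:ℕ) + 1 = 0)]
        exact ⟨hadj, hi, hj⟩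
      have hrij : r i j := ⟨1, fun k => if k = 0 then i else j, hce, by simp, by simp⟩
      have hreps : Quotient.out (Quotient.mk st i) = Quotient.out (Quotient.mk st j) := by
        congr 1
        exact Quotient.sound (s := st) hrij
      obtain ⟨hcc, hc0', hc1', hcs⟩ := chain_concat (σ := σ) (hcchain i) hce
        (by rw [hc1 i]; simp)
      have hu := csgn_unique (σ := σ) hG hσsymm hσsq hσtri hcc (hcchain j) ?_ ?_
      · rw [hcs] at hu
        have he1 : csgn σ (fun k => if k = 0 then i else j) 1 = σ i j := by
          rw [csgn, Finset.prod_range_one]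
          norm_num
        rw [he1] at hu
        calc (fun i => csgn σ (cg i) (cn i)) i * (fun i => csgn σ (cg i) (cn i)) j
            = csgn σ (cg i) (cn i) * csgn σ (cg j) (cn j) := rfl
          _ = csgn σ (cg i) (cn i) * (csgn σ (cg i) (cn i) * σ i j) := by rw [hu]
          _ = (csgn σ (cg i) (cn i) * csgn σ (cg i) (cn i)) * σ i j := by ring
          _ = σ i j := by rw [csgn_sq hσsq (hcchain i), one_mul]
      · simpa [hc0 i, hc0 j, hreps] using hc0'
      · simpa [hc1 j] using hc1'
    -- construct the completion vector
    obtain ⟨x, hxd, hxe⟩ : ∃ x : V → ℝ, (∀ i, x i * x i = Z' i i) ∧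
        (∀ i j, G.Adj i j → x i * x j = Z' i j) := by
      refine ⟨fun i => if Z' i i = 0 then 0 else ε i * Real.sqrt (Z' i i), ?_, ?_⟩
      · intro i
        by_cases h : Z' i i = 0
        · simp [h]
        · simp only [if_neg h]
          have hsq : Real.sqrt (Z' i i) * Real.sqrt (Z' i i) = Z' i i :=
            Real.mul_self_sqrt (hd0 i)
          calc (ε i * Real.sqrt (Z' i i)) * (ε i * Real.sqrt (Z' i i))
              = (ε i * ε i) * (Real.sqrt (Z' i i) * Real.sqrt (Z' i i)) := by ring
            _ = Z' i i := by rw [hεsq i, hsq, one_mul]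
      · intro i j hadj
        by_cases hi : Z' i i = 0
        · have hz2 : Z' i j ^ 2 = 0 := by rw [hE i j hadj, hi, zero_mul]
          have hz : Z' i j = 0 := pow_eq_zero_iff (by norm_num : (2:ℕ) ≠ 0) |>.mp hz2
          simp [hi, hz]
        · by_cases hj : Z' j j = 0
          · have hz2 : Z' i j ^ 2 = 0 := by rw [hE i j hadj, hj, mul_zero]
            have hz : Z' i j = 0 := pow_eq_zero_iff (by norm_num : (2:ℕ) ≠ 0) |>.mp hz2
            simp [hj, hz]
          · simp only [if_neg hi, if_neg hj]
            have h1 : 0 < Z' i i := lt_of_le_of_ne (hd0 i) (Ne.symm hi)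
            have h2 : 0 < Z' j j := lt_of_le_of_ne (hd0 j) (Ne.symm hj)
            have hn1 : Real.sqrt (Z' i i) ≠ 0 := ne_of_gt (Real.sqrt_pos.mpr h1)
            have hn2 : Real.sqrt (Z' j j) ≠ 0 := ne_of_gt (Real.sqrt_pos.mpr h2)
            have hk := hkey i j hadj hi hj
            calc (ε i * Real.sqrt (Z' i i)) * (ε j * Real.sqrt (Z' j j))
                = (ε i * ε j) * (Real.sqrt (Z' i i) * Real.sqrt (Z' j j)) := by ring
              _ = σ i j * (Real.sqrt (Z' i i) * Real.sqrt (Z' j j)) := by rw [hk]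
              _ = Z' i j := by
                  rw [hσdef]
                  dsimp only
                  field_simp
    exact ⟨Matrix.of fun i j => x i * x j, outer_posSemidef x, outer_rank_le_one x,
      fun i => hxd i, fun i j h => hxe i j h⟩
end

section
/- Let G(V,E) be a chordal graph with maximal cliques C₁,…,C_m. A symmetric matrix Z' partially specified on the diagonal and on E has a positive semidefinite completion if and only if every principal submatrix of Z' indexed by a maximal clique C_i is positive semidefinite. -/
set_option linter.unusedVariables false
set_option linter.unusedSectionVars false
set_option linter.unnecessarySeqFocus false
set_option maxHeartbeats 1000000

/-- walks inside a set `P`, indexed by ℕ. -/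
def Conn {V : Type*} (G : SimpleGraph V) (P : Set V) (u v : V) : Prop :=
  ∃ k : ℕ, ∃ g : ℕ → V, g 0 = u ∧ g k = v ∧ (∀ t ≤ k, g t ∈ P) ∧
    ∀ t < k, G.Adj (g t) (g (t + 1))

/-- simplicial vertex -/
def Simpl {V : Type*} (G : SimpleGraph V) (v : V) : Prop :=
  ∀ p q, G.Adj v p → G.Adj v q → p ≠ q → G.Adj p q

/-- boundary of a set of vertices -/
def Bd {V : Type*} (G : SimpleGraph V) (A : Set V) : Set V :=
  {s | s ∉ A ∧ ∃ x ∈ A, G.Adj s x}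

namespace Aux

variable {V : Type*} {G : SimpleGraph V}

lemma conn_refl {P : Set V} {u : V} (hu : u ∈ P) : Conn G P u u :=
  ⟨0, fun _ => u, rfl, rfl, fun t _ => hu, fun t ht => absurd ht (Nat.not_lt_zero t)⟩

lemma conn_symm {P : Set V} {u v : V} (h : Conn G P u v) : Conn G P v u := by
  obtain ⟨k, g, h0, hk, hP, hA⟩ := h
  refine ⟨k, fun t => g (k - t), by simp [hk], by simp [h0], fun t ht => hP _ (Nat.sub_le _ _), ?_⟩
  intro t ht
  have h1 : k - t = (k - (t+1)) + 1 := by omega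
  show G.Adj (g (k - t)) (g (k - (t+1)))
  rw [h1]
  exact (hA _ (by omega)).symm

lemma conn_trans {P : Set V} {u v w : V} (h1 : Conn G P u v) (h2 : Conn G P v w) :
    Conn G P u w := by
  obtain ⟨k, g, h0, hk, hP, hA⟩ := h1
  obtain ⟨l, g', h0', hl', hP', hA'⟩ := h2
  refine ⟨k + l, fun t => if t ≤ k then g t else g' (t - k), by simp [h0], ?_, ?_, ?_⟩
  · by_cases h : l = 0
    · simp [h, ← hl', h0', hk]
    · simp only [if_neg (by omega : ¬ k + l ≤ k)]
      simpa using hl'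
  · intro t ht
    by_cases h : t ≤ k
    · simpa [h] using hP t h
    · simp only [if_neg h]
      exact hP' _ (by omega)
  · intro t ht
    rcases lt_trichotomy t k with h | h | h
    · show G.Adj (if t ≤ k then g t else g' (t-k)) (if t+1 ≤ k then g (t+1) else g' (t+1-k))
      rw [if_pos h.le, if_pos (by omega : t+1 ≤ k)]
      exact hA t h
    · subst h
      by_cases h : l = 0
      · omega
      · show G.Adj (if t ≤ t then g t else g' (t-t)) (if t+1 ≤ t then g (t+1) else g' (t+1-t))
        simp only [if_pos le_rfl, if_neg (by omega : ¬ t + 1 ≤ t), (by omega : t+1-t = 1)]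
        have := hA' 0 (by omega)
        rw [h0'] at this
        rwa [hk]
    · simp only [if_neg (by omega : ¬ t ≤ k), if_neg (by omega : ¬ t + 1 ≤ k)]
      have h2 : t - k + 1 = t + 1 - k := by omega
      rw [← h2]
      exact hA' _ (by omega)

/-- every point on a walk witnessing `Conn G P u _` is `Conn`-reachable from u -/
lemma conn_of_walk_mem {P : Set V} {u : V} {k : ℕ} {g : ℕ → V} (h0 : g 0 = u)
    (hP : ∀ t ≤ k, g t ∈ P) (hA : ∀ t < k, G.Adj (g t) (g (t + 1))) {t : ℕ} (ht : t ≤ k) :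
    Conn G P u (g t) :=
  ⟨t, g, h0, rfl, fun s hs => hP s (le_trans hs ht), fun s hs => hA s (lt_of_lt_of_le hs ht)⟩

lemma conn_step {P : Set V} {u v w : V} (h : Conn G P u v) (hA : G.Adj v w) (hw : w ∈ P) :
    Conn G P u w := by
  refine conn_trans h ⟨1, fun t => if t = 0 then v else w, by simp, by simp, ?_, ?_⟩
  · intro t ht
    interval_cases t
    · simp only [if_pos rfl]
      obtain ⟨k, g, h0, hk, hP, hA⟩ := h
      rw [← hk]; exact hP _ le_rfl
    · simpa using hw
  · intro t ht
    interval_cases t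
    simpa using hA

lemma chordal_induce (hG : IsChordal G) (s : Set V) : IsChordal (G.induce s) := by
  intro n hn f hf hadj
  obtain ⟨i, j, h1, h2, h3, h4⟩ := hG n hn (fun i => (f i : V))
    (fun a b hab => hf (Subtype.val_injective hab)) (fun i => hadj i)
  exact ⟨i, j, h1, h2, h3, h4⟩

lemma zmod_val_add_one {n : ℕ} (hn : 2 ≤ n) (i : ZMod n) :
    (i + 1).val = if i.val = n - 1 then 0 else i.val + 1 := by
  haveI : NeZero n := ⟨by omega⟩
  haveI : Fact (1 < n) := ⟨by omega⟩
  have hlt : i.val < n := ZMod.val_lt i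
  rw [ZMod.val_add, ZMod.val_one]
  by_cases h : i.val = n - 1
  · simp [h, (by omega : n - 1 + 1 = n)]
  · rw [if_neg h, Nat.mod_eq_of_lt (by omega)]

lemma zmod_val_inj {n : ℕ} [NeZero n] {i j : ZMod n} (h : i.val = j.val) : i = j :=
  ZMod.val_injective n h

lemma sep_clique (hG : IsChordal G) {b x y : V} {A : Set V}
    (hAnb : ∀ z ∈ A, ¬G.Adj b z ∧ z ≠ b)
    (hconn : ∀ u v, u ∈ A → v ∈ A → Conn G A u v)
    (hx : x ∉ A) (hy : y ∉ A) (hbx : G.Adj b x) (hby : G.Adj b y)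
    (hxA : ∃ u ∈ A, G.Adj x u) (hyA : ∃ u ∈ A, G.Adj y u)
    (hne : x ≠ y) : G.Adj x y := by
  by_contra hxy
  classical
  set Q : ℕ → Prop := fun k => ∃ g : ℕ → V, g 0 = x ∧ g (k+1) = y ∧
    (∀ t, 1 ≤ t → t ≤ k → g t ∈ A) ∧ (∀ t ≤ k, G.Adj (g t) (g (t+1))) with hQdef
  obtain ⟨ax, haxA, hxax⟩ := hxA
  obtain ⟨ay, hayA, hyay⟩ := hyA
  obtain ⟨m, w, hw0, hwm, hwP, hwA⟩ := hconn ax ay haxA hayA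
  have hQex : ∃ k, Q k := by
    refine ⟨m + 1, fun t => if t = 0 then x else if t ≤ m + 1 then w (t-1) else y,
      by simp, ?_, ?_, ?_⟩ <;> beta_reduce
    · simp [(by omega : ¬ (m + 1 + 1 = 0)), (by omega : ¬ m + 1 + 1 ≤ m + 1)]
    · intro t h1 h2
      rw [if_neg (by omega), if_pos (by omega)]
      exact hwP _ (by omega)
    · intro t ht
      rcases Nat.eq_zero_or_pos t with h0 | h0
      · subst h0
        simp only [if_pos rfl, if_neg (by omega : ¬ (0:ℕ)+1 = 0), if_pos (by omega : 0+1 ≤ m+1)]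
        simpa [hw0] using hxax
      · rcases Nat.lt_or_ge t (m + 1) with h1 | h1
        · rw [if_neg (by omega), if_pos (by omega), if_neg (by omega), if_pos (by omega),
            (by omega : t + 1 - 1 = (t - 1) + 1)]
          exact hwA (t-1) (by omega)
        · have ht1 : t = m + 1 := by omega
          subst ht1
          rw [if_neg (by omega), if_pos (by omega), if_neg (by omega), if_neg (by omega),
            (by omega : m + 1 - 1 = m), hwm]
          exact hyay.symm
  -- minimal walk
  obtain ⟨k, hkQ, hmin⟩ : ∃ k, Q k ∧ ∀ k' < k, ¬ Q k' :=
    ⟨Nat.find hQex, Nat.find_spec hQex, fun k' h => Nat.find_min hQex h⟩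
  obtain ⟨g, hg0, hgk, hgP, hgA⟩ := hkQ
  have hk1 : 1 ≤ k := by
    by_contra h
    have hk0 : k = 0 := by omega
    subst hk0
    have h2 := hgA 0 le_rfl
    rw [hg0, hgk] at h2
    exact hxy h2
  -- shortcut construction
  have build : ∀ j p : ℕ, 1 ≤ j → p + j ≤ k → G.Adj (g p) (g (p + j + 1)) → False := by
    intro j p hj hpj hadj
    refine hmin (k - j) (by omega) ⟨fun t => if t ≤ p then g t else g (t + j), ?_, ?_, ?_, ?_⟩
      <;> beta_reduce
    · rw [if_pos (by omega)]; exact hg0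
    · rw [if_neg (by omega), (by omega : k - j + 1 + j = k + 1)]; exact hgk
    · intro t h1 h2
      by_cases h : t ≤ p
      · rw [if_pos h]; exact hgP t h1 (by omega)
      · rw [if_neg h]; exact hgP (t + j) (by omega) (by omega)
    · intro t ht
      rcases lt_trichotomy t p with h | h | h
      · rw [if_pos (by omega), if_pos (by omega)]; exact hgA t (by omega)
      · subst h
        rw [if_pos le_rfl, if_neg (by omega), (by omega : t + 1 + j = t + j + 1)]
        exact hadj
      · rw [if_neg (by omega), if_neg (by omega), (by omega : t + 1 + j = t + j + 1)]
        exact hgA (t + j) (by omega)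
  have hdup : ∀ p q : ℕ, p < q → q ≤ k + 1 → g p ≠ g q := by
    intro p q hpq hq hd
    rcases Nat.lt_or_ge q (k + 1) with h | h
    · exact build (q - p) p (by omega) (by omega)
        (by rw [(by omega : p + (q - p) + 1 = q + 1), hd]; exact hgA q (by omega))
    · have hq1 : q = k + 1 := by omega
      subst hq1
      rw [hgk] at hd
      rcases Nat.eq_zero_or_pos p with h0 | h0
      · subst h0; rw [hg0] at hd; exact hne hd
      · exact hy (hd ▸ hgP p h0 (by omega))
  have hchord : ∀ p q : ℕ, p + 2 ≤ q → q ≤ k + 1 → ¬(p = 0 ∧ q = k + 1) →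
      ¬ G.Adj (g p) (g q) := by
    intro p q hpq hq hne' hadj
    rcases Nat.lt_or_ge q (k + 1) with h | h
    · exact build (q - p - 1) p (by omega) (by omega)
        (by rw [(by omega : p + (q - p - 1) + 1 = q)]; exact hadj)
    · have hq1 : q = k + 1 := by omega
      subst hq1
      have hp1 : 1 ≤ p := by omega
      exact build (k - p) p (by omega) (by omega)
        (by rw [(by omega : p + (k - p) + 1 = k + 1)]; exact hadj)
  -- facts about b
  have hbint : ∀ t : ℕ, 1 ≤ t → t ≤ k → ¬ G.Adj b (g t) ∧ g t ≠ b :=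
    fun t h1 h2 => hAnb _ (hgP t h1 h2)
  have hbne : ∀ t : ℕ, t ≤ k + 1 → g t ≠ b := by
    intro t ht
    rcases Nat.eq_zero_or_pos t with h0 | h0
    · subst h0; rw [hg0]; exact fun h => G.irrefl (h ▸ hbx)
    · rcases Nat.lt_or_ge t (k + 1) with h | h
      · exact (hbint t h0 (by omega)).2
      · have : t = k + 1 := by omega
        subst this; rw [hgk]; exact fun h => G.irrefl (h ▸ hby)
  -- the cycle
  haveI : NeZero (k + 3) := ⟨by omega⟩
  set f : ZMod (k + 3) → V := fun i => if i.val = 0 then b else g (i.val - 1) with hfdef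
  have hvlt : ∀ i : ZMod (k + 3), i.val < k + 3 := fun i => ZMod.val_lt i
  have hv1 : ∀ i : ZMod (k + 3), (i + 1).val = if i.val = k + 2 then 0 else i.val + 1 := by
    intro i
    have := zmod_val_add_one (n := k + 3) (by omega) i
    simpa using this
  have finj : Function.Injective f := by
    intro i j hij
    simp only [hfdef] at hij
    by_cases hi : i.val = 0 <;> by_cases hj : j.val = 0
    · exact zmod_val_inj (by omega)
    · rw [if_pos hi, if_neg hj] at hij
      exact absurd hij.symm (hbne (j.val - 1) (by have := hvlt j; omega))
    · rw [if_neg hi, if_pos hj] at hij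
      exact absurd hij (hbne (i.val - 1) (by have := hvlt i; omega))
    · rw [if_neg hi, if_neg hj] at hij
      refine zmod_val_inj ?_
      by_contra hvne
      rcases Nat.lt_or_ge i.val j.val with h | h
      · exact hdup (i.val - 1) (j.val - 1) (by omega) (by have := hvlt j; omega) hij
      · exact hdup (j.val - 1) (i.val - 1) (by omega) (by have := hvlt i; omega) hij.symm
  have fadj : ∀ i, G.Adj (f i) (f (i + 1)) := by
    intro i
    simp only [hfdef]
    beta_reduce
    have hi := hvlt i
    rcases Nat.eq_zero_or_pos i.val with h0 | h0
    · have h1 : (i+1).val = 1 := by rw [hv1, if_neg (by omega), h0]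
      rw [h0, h1, if_pos rfl, if_neg one_ne_zero, (by norm_num : (1:ℕ) - 1 = 0), hg0]
      exact hbx
    · by_cases htop : i.val = k + 2
      · have h1 : (i+1).val = 0 := by rw [hv1, if_pos htop]
        rw [if_neg (by omega), h1, if_pos rfl, htop, (by omega : k + 2 - 1 = k + 1), hgk]
        exact hby.symm
      · have h1 : (i+1).val = i.val + 1 := by rw [hv1, if_neg htop]
        rw [if_neg (by omega), h1, if_neg (by omega),
          (by omega : i.val + 1 - 1 = (i.val - 1) + 1)]
        exact hgA (i.val - 1) (by omega)
  -- apply chordality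
  obtain ⟨i, j, hij, hji1, hij1, hadjf⟩ := hG (k + 3) (by omega) f finj fadj
  -- nonadjacency claim on positions
  have claim : ∀ s t : ℕ, s < t → t ≤ k + 2 → t ≠ s + 1 → ¬(s = 0 ∧ t = k + 2) →
      ¬ G.Adj (if s = 0 then b else g (s - 1)) (if t = 0 then b else g (t - 1)) := by
    intro s t hst ht hts hne' hadj
    rcases Nat.eq_zero_or_pos s with h0 | h0
    · subst h0
      rw [if_pos rfl, if_neg (by omega)] at hadj
      exact (hbint (t - 1) (by omega) (by omega)).1 hadj
    · rw [if_neg (by omega), if_neg (by omega)] at hadj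
      by_cases hxy' : s = 1 ∧ t = k + 2
      · rw [hxy'.1, hxy'.2, (by omega : 1 - 1 = 0), (by omega : k + 2 - 1 = k + 1), hg0, hgk]
          at hadj
        exact hxy hadj
      · exact hchord (s - 1) (t - 1) (by omega) (by omega) (by omega) hadj
  -- derive contradiction
  have hijv : i.val ≠ j.val := fun h => hij (zmod_val_inj h)
  rcases Nat.lt_or_ge i.val j.val with h | h
  · refine claim i.val j.val h (by have := hvlt j; omega) ?_ ?_ hadjf
    · intro he
      apply hji1
      refine zmod_val_inj ?_
      rw [hv1, if_neg (by have := hvlt j; omega), he]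
    · rintro ⟨h1, h2⟩
      apply hij1
      refine zmod_val_inj ?_
      rw [hv1, if_pos h2, h1]
  · refine claim j.val i.val (by omega) (by have := hvlt i; omega) ?_ ?_ hadjf.symm
    · intro he
      apply hij1
      refine zmod_val_inj ?_
      rw [hv1, if_neg (by have := hvlt i; omega), he]
    · rintro ⟨h1, h2⟩
      apply hji1
      refine zmod_val_inj ?_
      rw [hv1, if_pos h2, h1]

lemma side_lemma {V : Type} [Fintype V] [DecidableEq V] {G : SimpleGraph V} (hG : IsChordal G)
    (IH : ∀ (W : Type) [Fintype W] [DecidableEq W] (H : SimpleGraph W),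
      Fintype.card W < Fintype.card V → IsChordal H →
      (∀ u w : W, u ≠ w → H.Adj u w) ∨
        ∃ u w : W, u ≠ w ∧ ¬H.Adj u w ∧ Simpl H u ∧ Simpl H w)
    (A : Set V) (hA : A.Nonempty)
    (hC : ∀ p q, p ∈ Bd G A → q ∈ Bd G A → p ≠ q → G.Adj p q)
    (hout : ∃ z, z ∉ A ∧ z ∉ Bd G A) :
    ∃ u ∈ A, Simpl G u := by
  classical
  obtain ⟨z, hz1, hz2⟩ := hout
  set s : Set V := A ∪ Bd G A with hsdef
  have hcard : Fintype.card ↥s < Fintype.card V := by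
    refine Fintype.card_lt_of_injective_of_notMem (Subtype.val) Subtype.val_injective (b := z) ?_
    rw [Subtype.range_coe]
    rintro (h | h)
    · exact hz1 h
    · exact hz2 h
  rcases IH ↥s (G.induce s) hcard (chordal_induce hG s) with
    hcomp | ⟨u1, u2, hne, hnadj, hs1, hs2⟩
  · obtain ⟨a0, ha0⟩ := hA
    refine ⟨a0, ha0, ?_⟩
    intro p q hap haq hpq
    have hmem : ∀ r, G.Adj a0 r → r ∈ s := by
      intro r hr
      by_cases h : r ∈ A
      · exact Or.inl h
      · exact Or.inr ⟨h, a0, ha0, hr.symm⟩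
    exact hcomp ⟨p, hmem p hap⟩ ⟨q, hmem q haq⟩
      (fun hh => hpq (congrArg Subtype.val hh))
  · have final : ∀ u : ↥s, Simpl (G.induce s) u → (u : V) ∈ A → ∃ u' ∈ A, Simpl G u' := by
      intro u hsimp huA
      refine ⟨↑u, huA, ?_⟩
      intro p q hap haq hpq
      have hmem : ∀ r, G.Adj ↑u r → r ∈ s := by
        intro r hr
        by_cases h : r ∈ A
        · exact Or.inl h
        · exact Or.inr ⟨h, ↑u, huA, hr.symm⟩
      exact hsimp ⟨p, hmem p hap⟩ ⟨q, hmem q haq⟩ hap haq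
        (fun hh => hpq (congrArg Subtype.val hh))
    have hval : (u1 : V) ∈ A ∨ (u2 : V) ∈ A := by
      by_contra h
      push_neg at h
      have h1 : (u1 : V) ∈ Bd G A := u1.2.resolve_left h.1
      have h2 : (u2 : V) ∈ Bd G A := u2.2.resolve_left h.2
      exact hnadj (hC _ _ h1 h2 (fun hh => hne (Subtype.ext hh)))
    rcases hval with h | h
    · exact final u1 hs1 h
    · exact final u2 hs2 h

theorem dirac : ∀ (n : ℕ) (V : Type) [Fintype V] [DecidableEq V] (G : SimpleGraph V),
    Fintype.card V ≤ n → IsChordal G →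
    (∀ u w : V, u ≠ w → G.Adj u w) ∨
      ∃ u w : V, u ≠ w ∧ ¬G.Adj u w ∧ Simpl G u ∧ Simpl G w := by
  intro n
  induction n with
  | zero =>
    intro V _ _ G hcard _
    have : IsEmpty V := Fintype.card_eq_zero_iff.mp (le_antisymm hcard (Nat.zero_le _))
    exact Or.inl (fun u => isEmptyElim u)
  | succ n ih =>
    intro V _ _ G hcard hG
    classical
    by_cases hcomp : ∀ u w : V, u ≠ w → G.Adj u w
    · exact Or.inl hcomp
    right
    push_neg at hcomp
    obtain ⟨a, b, hab, hnadj⟩ := hcomp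
    have IH : ∀ (W : Type) [Fintype W] [DecidableEq W] (H : SimpleGraph W),
        Fintype.card W < Fintype.card V → IsChordal H →
        (∀ u w : W, u ≠ w → H.Adj u w) ∨
          ∃ u w : W, u ≠ w ∧ ¬H.Adj u w ∧ Simpl H u ∧ Simpl H w := by
      intro W _ _ H hlt hH
      exact ih W H (by omega) hH
    set Nb : Set V := {w | ¬ G.Adj b w ∧ w ≠ b} with hNbdef
    set A : Set V := {z | Conn G Nb a z} with hAdef
    have haNb : a ∈ Nb := ⟨fun h => hnadj h.symm, hab⟩
    have haA : a ∈ A := conn_refl haNb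
    have hANb : A ⊆ Nb := by
      rintro z ⟨k, g, h0, hk, hP, hA'⟩
      rw [← hk]; exact hP k le_rfl
    have hclose : ∀ z ∈ A, ∀ r, G.Adj z r → r ∈ Nb → r ∈ A :=
      fun z hz r hr hrNb => conn_step hz hr hrNb
    have hbd : ∀ p ∈ Bd G A, G.Adj b p ∧ p ≠ b := by
      rintro p ⟨hpA, x, hxA, hpx⟩
      have hpNb : p ∉ Nb := fun h => hpA (hclose x hxA p hpx.symm h)
      by_cases hpb : p = b
      · subst hpb
        exact absurd hpx (hANb hxA).1
      · simp only [hNbdef, Set.mem_setOf_eq, not_and] at hpNb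
        exact ⟨not_not.mp (fun h => (hpNb h) hpb), hpb⟩
    have hupg : ∀ u ∈ A, Conn G A a u := by
      rintro u ⟨k, g, h0, hk, hP, hA'⟩
      exact ⟨k, g, h0, hk, fun t ht => conn_of_walk_mem h0 hP hA' ht, hA'⟩
    have hconnA : ∀ u v, u ∈ A → v ∈ A → Conn G A u v :=
      fun u v hu hv => conn_trans (conn_symm (hupg u hu)) (hupg v hv)
    have hCclique : ∀ p q, p ∈ Bd G A → q ∈ Bd G A → p ≠ q → G.Adj p q := by
      intro p q hp hq hpq
      exact sep_clique hG (fun z hz => hANb hz)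
        hconnA hp.1 hq.1 (hbd p hp).1 (hbd q hq).1 hp.2 hq.2 hpq
    have hbA : b ∉ A := fun h => (hANb h).2 rfl
    have hbBd : b ∉ Bd G A := fun h => (hbd b h).2 rfl
    obtain ⟨ua, huaA, huaS⟩ := side_lemma hG IH A ⟨a, haA⟩ hCclique ⟨b, hbA, hbBd⟩
    -- second side
    set S : Set V := Bd G A with hSdef
    set B : Set V := {z | Conn G Sᶜ b z} with hBdef
    have hbS : b ∈ Sᶜ := hbBd
    have hbB : b ∈ B := conn_refl hbS
    have hBS : B ⊆ Sᶜ := by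
      rintro z ⟨k, g, h0, hk, hP, hA'⟩
      rw [← hk]; exact hP k le_rfl
    have hBbd : ∀ p ∈ Bd G B, p ∈ S := by
      rintro p ⟨hpB, x, hxB, hpx⟩
      by_contra hpS
      exact hpB (conn_step hxB hpx.symm hpS)
    have hsep : ∀ z ∈ B, z ∉ A := by
      rintro z ⟨k, g, h0, hk, hP, hA'⟩ hzA
      have hPex : ∃ t, t ≤ k ∧ g t ∈ A := ⟨k, le_rfl, hk ▸ hzA⟩
      obtain ⟨t0, ⟨ht0k, ht0A⟩, ht0min⟩ :
          ∃ t0, (t0 ≤ k ∧ g t0 ∈ A) ∧ ∀ t' < t0, ¬(t' ≤ k ∧ g t' ∈ A) :=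
        ⟨Nat.find hPex, Nat.find_spec hPex, fun t' h => Nat.find_min hPex h⟩
      have ht01 : 1 ≤ t0 := by
        by_contra h
        have : t0 = 0 := by omega
        subst this
        rw [h0] at ht0A
        exact hbA ht0A
      have hprev : g (t0 - 1) ∉ A := fun h => ht0min (t0 - 1) (by omega) ⟨by omega, h⟩
      have hadj : G.Adj (g (t0 - 1)) (g t0) := by
        have := hA' (t0 - 1) (by omega)
        rwa [(by omega : t0 - 1 + 1 = t0)] at this
      have : g (t0 - 1) ∈ S := ⟨hprev, g t0, ht0A, hadj⟩
      exact (hP (t0 - 1) (by omega)) this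
    have haB : a ∉ B := fun h => (hsep a h) haA
    have haBd : a ∉ Bd G B := fun h => (hBbd a h).1 haA
    obtain ⟨ub, hubB, hubS⟩ := side_lemma hG IH B ⟨b, hbB⟩
      (fun p q hp hq hpq => hCclique p q (hBbd p hp) (hBbd q hq) hpq) ⟨a, haB, haBd⟩
    refine ⟨ua, ub, ?_, ?_, huaS, hubS⟩
    · intro h
      exact (hsep ub hubB) (h ▸ huaA)
    · intro hadj
      exact (hBS hubB) ⟨hsep ub hubB, ua, huaA, hadj.symm⟩


lemma exists_simpl {V : Type} [Fintype V] [DecidableEq V] (G : SimpleGraph V)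
    (hG : IsChordal G) (hne : Nonempty V) : ∃ v, Simpl G v := by
  rcases dirac (Fintype.card V) V G le_rfl hG with h | ⟨u, w, _, _, hu, _⟩
  · obtain ⟨v⟩ := hne
    exact ⟨v, fun p q hp hq hpq => h p q hpq⟩
  · exact ⟨u, hu⟩

open Matrix

-- symmetric real matrix: b ⊥ ker A → b ∈ range A
lemma solvable {m : Type} [Fintype m] [DecidableEq m] (A : Matrix m m ℝ) (hsym : Aᵀ = A)
    (b : m → ℝ) (hb : ∀ z : m → ℝ, A.mulVec z = 0 → b ⬝ᵥ z = 0) :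
    ∃ x : m → ℝ, A.mulVec x = b := by
  classical
  let E := EuclideanSpace ℝ m
  let T : E →ₗ[ℝ] E := Matrix.toEuclideanLin A
  let K : Submodule ℝ E := LinearMap.range T
  have hdot : ∀ u v : E, @inner ℝ E _ u v = (u : m → ℝ) ⬝ᵥ (v : m → ℝ) := by
    intro u v
    rw [PiLp.inner_apply]
    simp [dotProduct, mul_comm]
  have hbmem : (WithLp.toLp 2 b : E) ∈ K ⊔ Kᗮ := by
    rw [Submodule.sup_orthogonal_of_hasOrthogonalProjection]
    trivial
  obtain ⟨y, hy, z, hz, hyz⟩ := Submodule.mem_sup.mp hbmem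
  have hzK : ∀ w : m → ℝ, (A.mulVec w) ⬝ᵥ z = 0 := by
    intro w
    have := (Submodule.mem_orthogonal K z).mp hz (T (WithLp.toLp 2 w)) ⟨WithLp.toLp 2 w, rfl⟩
    rw [hdot] at this
    exact this
  have hAz : A.mulVec z = 0 := by
    have h1 : ∀ w : m → ℝ, w ⬝ᵥ (A.mulVec z) = 0 := by
      intro w
      have h2 := hzK w
      rw [dotProduct_comm] at h2
      rw [dotProduct_mulVec] at h2
      rw [← Matrix.mulVec_transpose, hsym] at h2
      rwa [dotProduct_comm] at h2
    have := h1 (A.mulVec z)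
    rwa [dotProduct_self_eq_zero] at this
  have hbz : b ⬝ᵥ z = 0 := hb z hAz
  have hyzdot : (y : m → ℝ) ⬝ᵥ z = 0 := by
    have := (Submodule.mem_orthogonal K z).mp hz y hy
    rw [hdot] at this
    exact this
  have hzz : (z : m → ℝ) ⬝ᵥ z = 0 := by
    have h3 : b ⬝ᵥ z = (y : m → ℝ) ⬝ᵥ z + (z : m → ℝ) ⬝ᵥ z := by
      rw [← add_dotProduct]
      exact congrArg (fun v : E => (v : m → ℝ) ⬝ᵥ (z : m → ℝ)) hyz.symm
    rw [hbz, hyzdot] at h3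
    linarith
  have hz0 : z = 0 := by
    have := dotProduct_self_eq_zero.mp hzz
    exact WithLp.ofLp_injective 2 this
  obtain ⟨u0, hu0⟩ := hy
  refine ⟨(u0 : m → ℝ), ?_⟩
  have h4 : A.mulVec u0 = y := by have := congrArg WithLp.ofLp hu0; exact this
  rw [h4]
  have h5 := congrArg WithLp.ofLp hyz
  rw [hz0, add_zero] at h5
  exact h5

namespace Blocks
open Matrix

variable {m : Type} [Fintype m] [DecidableEq m]

def bord (d : ℝ) (c : m → ℝ) (W : Matrix m m ℝ) : Matrix (Unit ⊕ m) (Unit ⊕ m) ℝ :=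
  Matrix.fromBlocks (Matrix.of fun _ _ => d) (Matrix.of fun _ j => c j)
    (Matrix.of fun i _ => c i) W

lemma bord_eq (d : ℝ) (c : m → ℝ) (W : Matrix m m ℝ) :
    bord d c W = Matrix.fromBlocks (Matrix.of fun _ _ => d) (Matrix.of fun _ j => c j)
      (Matrix.of fun i _ => c i) W := rfl

lemma quad_eval (d : ℝ) (c : m → ℝ) (W : Matrix m m ℝ) (t : ℝ) (y : m → ℝ) :
    (Sum.elim (fun _ => t) y) ⬝ᵥ ((bord d c W) *ᵥ (Sum.elim (fun _ => t) y)) =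
      d * t * t + 2 * t * (c ⬝ᵥ y) + y ⬝ᵥ W.mulVec y := by
  rw [bord, fromBlocks_mulVec, sumElim_dotProduct_sumElim]
  simp only [Sum.elim_comp_inl, Sum.elim_comp_inr]
  have h1 : ((Matrix.of fun (_ : Unit) (_ : Unit) => d) *ᵥ (fun _ => t) + (Matrix.of fun (_ : Unit) j => c j) *ᵥ y)
      = fun _ => d * t + c ⬝ᵥ y := by
    funext u
    simp [Matrix.mulVec, dotProduct]
  have h2 : ((Matrix.of fun i (_ : Unit) => c i) *ᵥ (fun _ => t)) = fun i => c i * t := by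
    funext i
    simp [Matrix.mulVec, dotProduct]
  rw [h1, h2]
  have h3 : (fun (_ : Unit) => t) ⬝ᵥ (fun _ => d * t + c ⬝ᵥ y) = t * (d * t + c ⬝ᵥ y) := by
    simp [dotProduct]
  rw [h3, dotProduct_add, dotProduct_comm y (fun i => c i * t)]
  have h4 : (fun i => c i * t) ⬝ᵥ y = t * (c ⬝ᵥ y) := by
    simp [dotProduct, Finset.mul_sum]
    ring_nf
    exact Finset.sum_congr rfl (fun i _ => by ring)
  rw [h4]
  ring

lemma star_trivial' (x : Unit ⊕ m → ℝ) : star x = x := by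
  funext i; simp

lemma quad_eval' (d : ℝ) (c : m → ℝ) (W : Matrix m m ℝ) (x : Unit ⊕ m → ℝ) :
    star x ⬝ᵥ ((bord d c W) *ᵥ x) =
      d * x (Sum.inl ()) * x (Sum.inl ()) + 2 * x (Sum.inl ()) * (c ⬝ᵥ (x ∘ Sum.inr)) +
        (x ∘ Sum.inr) ⬝ᵥ W.mulVec (x ∘ Sum.inr) := by
  rw [star_trivial']
  have hx : x = Sum.elim (fun _ => x (Sum.inl ())) (x ∘ Sum.inr) := by
    funext i
    cases i with
    | inl u => cases u; rfl
    | inr v => rfl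
  conv_lhs => rw [hx]
  exact quad_eval d c W (x (Sum.inl ())) (x ∘ Sum.inr)

/-- consumer direction -/
lemma bordered_psd_extract (A : Matrix m m ℝ) (b : m → ℝ) (d : ℝ)
    (hM : (bord d b A).PosSemidef) :
    ∃ x : m → ℝ, A.mulVec x = b ∧ x ⬝ᵥ b ≤ d := by
  have hAsym : Aᵀ = A := by
    ext i j
    have := congrFun (congrFun hM.1 (Sum.inr i)) (Sum.inr j)
    simpa [bord, Matrix.conjTranspose_apply] using this
  have hform : ∀ (t : ℝ) (y : m → ℝ),
      0 ≤ d * t * t + 2 * t * (b ⬝ᵥ y) + y ⬝ᵥ A.mulVec y := by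
    intro t y
    have := hM.dotProduct_mulVec_nonneg (Sum.elim (fun _ => t) y)
    rwa [star_trivial', quad_eval] at this
  have hd0 : 0 ≤ d := by
    have := hform 1 0
    simpa using this
  have hker : ∀ z : m → ℝ, A.mulVec z = 0 → b ⬝ᵥ z = 0 := by
    intro z hz
    by_contra hbz
    set cval := b ⬝ᵥ z with hcv
    have hc2 : 0 < cval ^ 2 := by
      have habs := abs_pos.mpr hbz
      nlinarith [sq_abs cval]
    rcases eq_or_lt_of_le hd0 with hd | hd
    · have h5 := hform (-cval) z
      rw [hz, dotProduct_zero, ← hd] at h5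
      nlinarith
    · have h5 := hform (-cval / d) z
      rw [hz, dotProduct_zero] at h5
      have h6 : d * (-cval / d) * (-cval / d) + 2 * (-cval / d) * cval + 0
          = -(cval ^ 2) / d := by
        field_simp
        ring
      rw [h6] at h5
      have h7 : -(cval ^ 2) / d < 0 := div_neg_of_neg_of_pos (by nlinarith) hd
      linarith
  obtain ⟨x, hx⟩ := Aux.solvable A hAsym b hker
  refine ⟨x, hx, ?_⟩
  have h5 := hform 1 (-x)
  rw [Matrix.mulVec_neg, hx] at h5
  simp only [dotProduct_neg, neg_dotProduct, neg_neg] at h5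
  have hcomm : b ⬝ᵥ x = x ⬝ᵥ b := dotProduct_comm _ _
  nlinarith

/-- producer direction -/
lemma bordered_psd_make (W : Matrix m m ℝ) (hW : W.PosSemidef) (xh : m → ℝ) (d : ℝ)
    (hd : xh ⬝ᵥ W.mulVec xh ≤ d) :
    (bord d (W.mulVec xh) W).PosSemidef := by
  have hWsym : Wᵀ = W := by
    ext i j
    have := congrFun (congrFun hW.1 i) j
    simpa [Matrix.conjTranspose_apply] using this
  refine Matrix.PosSemidef.of_dotProduct_mulVec_nonneg ?_ ?_
  · show (bord d (W.mulVec xh) W).conjTranspose = _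
    ext i j
    cases i <;> cases j <;>
      simp [bord, Matrix.conjTranspose_apply, Matrix.fromBlocks] <;>
      exact (congrFun (congrFun hWsym _) _)
  · intro x
    rw [quad_eval']
    set t := x (Sum.inl ()) with htdef
    set y := x ∘ Sum.inr with hydef
    have key : d * t * t + 2 * t * ((W.mulVec xh) ⬝ᵥ y) + y ⬝ᵥ W.mulVec y =
        (d - xh ⬝ᵥ W.mulVec xh) * t * t +
          (y + t • xh) ⬝ᵥ W.mulVec (y + t • xh) := by
      rw [Matrix.mulVec_add, Matrix.mulVec_smul]
      rw [add_dotProduct, dotProduct_add, dotProduct_add, dotProduct_smul, smul_dotProduct,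
        smul_dotProduct, dotProduct_smul]
      have hsw : (W.mulVec xh) ⬝ᵥ y = xh ⬝ᵥ W.mulVec y := by
        rw [dotProduct_comm, dotProduct_mulVec, ← Matrix.mulVec_transpose, hWsym,
          dotProduct_comm]
      have hsw2 : y ⬝ᵥ W.mulVec xh = xh ⬝ᵥ W.mulVec y := by
        rw [dotProduct_mulVec, ← Matrix.mulVec_transpose, hWsym, dotProduct_comm]
      rw [hsw]
      simp only [smul_eq_mul]
      rw [hsw2]
      ring
    rw [key]
    have h1 : 0 ≤ (y + t • xh) ⬝ᵥ W.mulVec (y + t • xh) := by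
      have := hW.dotProduct_mulVec_nonneg (y + t • xh)
      rwa [star_trivial] at this
    nlinarith [sq_nonneg t]

lemma sum_over_subtype (N : Set m) [DecidablePred (· ∈ N)] (f : m → ℝ)
    (hf : ∀ u, u ∉ N → f u = 0) : ∑ u : m, f u = ∑ u : ↥N, f ↑u := by
  have h1 : ∑ u ∈ Finset.univ.filter (· ∈ N), f u = ∑ u : m, f u :=
    Finset.sum_filter_of_ne (fun x _ hx => by_contra fun hn => hx (hf x hn))
  rw [← h1, Finset.sum_subtype (p := (· ∈ N)) _ (by simp) f]

lemma completion_step (W : Matrix m m ℝ) (hW : W.PosSemidef)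
    (N : Set m) [DecidablePred (· ∈ N)] (bfull : m → ℝ) (d : ℝ)
    (hM : (bord d (fun j : ↥N => bfull ↑j)
      (W.submatrix ((↑·) : ↥N → m) ((↑·) : ↥N → m))).PosSemidef) :
    ∃ c : m → ℝ, (∀ w, w ∈ N → c w = bfull w) ∧ (bord d c W).PosSemidef := by
  classical
  set A := W.submatrix ((↑·) : ↥N → m) ((↑·) : ↥N → m) with hAdef
  obtain ⟨x, hx, hxb⟩ := bordered_psd_extract A _ d hM
  set xh : m → ℝ := fun w => if h : w ∈ N then x ⟨w, h⟩ else 0 with hxhdef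
  have hxh0 : ∀ u, u ∉ N → xh u = 0 := by
    intro u hu
    rw [hxhdef]
    simp [hu]
  have hxhval : ∀ u : ↥N, xh ↑u = x u := by
    intro u
    rw [hxhdef]
    simp [u.2]
  have hsum : ∀ w : m, W.mulVec xh w = ∑ u : ↥N, W w ↑u * x u := by
    intro w
    show ∑ u : m, W w u * xh u = _
    rw [sum_over_subtype N (fun u => W w u * xh u) (fun u hu => by show W w u * xh u = 0; rw [hxh0 u hu, mul_zero])]
    exact Finset.sum_congr rfl (fun u _ => by
      show W w ↑u * xh ↑u = W w ↑u * x u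
      rw [hxhval u])
  have hAx : ∀ p : ↥N, A.mulVec x p = ∑ u : ↥N, W ↑p ↑u * x u := by
    intro p
    show ∑ u : ↥N, A p u * x u = _
    exact Finset.sum_congr rfl (fun u _ => rfl)
  have hagree : ∀ w, w ∈ N → W.mulVec xh w = bfull w := by
    intro w hw
    rw [hsum w, ← hAx ⟨w, hw⟩, hx]
  have hquad : xh ⬝ᵥ W.mulVec xh ≤ d := by
    have h1 : xh ⬝ᵥ W.mulVec xh = ∑ u : ↥N, x u * W.mulVec xh ↑u := by
      show ∑ u : m, xh u * W.mulVec xh u = _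
      rw [sum_over_subtype N (fun u => xh u * W.mulVec xh u)
        (fun u hu => by show xh u * W.mulVec xh u = 0; rw [hxh0 u hu, zero_mul])]
      exact Finset.sum_congr rfl (fun u _ => by
        show xh ↑u * W.mulVec xh ↑u = x u * W.mulVec xh ↑u
        rw [hxhval u])
    have h2 : ∑ u : ↥N, x u * W.mulVec xh ↑u = x ⬝ᵥ A.mulVec x := by
      refine Finset.sum_congr rfl (fun u _ => ?_)
      rw [hsum ↑u, ← hAx u]
    rw [h1, h2, hx]
    exact hxb
  exact ⟨W.mulVec xh, hagree, bordered_psd_make W hW xh d hquad⟩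

end Blocks

lemma symm_entries {V : Type} [Fintype V] {Z : Matrix V V ℝ} (h : Z.IsSymm) :
    ∀ i j, Z j i = Z i j := by
  intro i j
  conv_rhs => rw [← h]
  rfl

lemma clique_extend {V : Type} [Fintype V] [DecidableEq V] (G : SimpleGraph V)
    (s : Finset V) (hs : G.IsClique ↑s) : ∃ t : Finset V, s ⊆ t ∧ IsMaxClq G ↑t := by
  classical
  set C : Finset (Finset V) := Finset.univ.filter (fun t => s ⊆ t ∧ G.IsClique ↑t) with hC
  have hsC : s ∈ C := by simp [hC, hs]
  obtain ⟨t, htC, htmax⟩ := Finset.exists_max_image C Finset.card ⟨s, hsC⟩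
  simp only [hC, Finset.mem_filter, Finset.mem_univ, true_and] at htC
  refine ⟨t, htC.1, htC.2, ?_⟩
  intro t' ht' hsub
  by_contra hne
  have hnsub : ¬ (t' ⊆ ↑t) := fun h => hne (le_antisymm hsub h)
  obtain ⟨a, hat', hat⟩ := Set.not_subset.mp hnsub
  have hins : G.IsClique ↑(insert a t) := by
    rw [Finset.coe_insert]
    exact ht'.subset (Set.insert_subset hat' hsub)
  have hmemC : insert a t ∈ C := by
    simp only [hC, Finset.mem_filter, Finset.mem_univ, true_and]
    exact ⟨htC.1.trans (Finset.subset_insert a t), hins⟩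
  have hcard := htmax _ hmemC
  rw [Finset.card_insert_of_notMem (by simpa using hat)] at hcard
  omega

theorem completion : ∀ (n : ℕ) (V : Type) [Fintype V] [DecidableEq V] (G : SimpleGraph V),
    Fintype.card V ≤ n → IsChordal G → ∀ Z' : Matrix V V ℝ, Z'.IsSymm →
    (∀ s : Finset V, G.IsClique ↑s →
      (Z'.submatrix (fun i : s => (i : V)) (fun j : s => (j : V))).PosSemidef) →
    ∃ Z : Matrix V V ℝ, Z.PosSemidef ∧ (∀ i, Z i i = Z' i i) ∧
      (∀ i j, G.Adj i j → Z i j = Z' i j) := by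
  intro n
  induction n with
  | zero =>
    intro V _ _ G hcard hG Z' hsym hclq
    haveI : IsEmpty V := Fintype.card_eq_zero_iff.mp (le_antisymm hcard (Nat.zero_le _))
    refine ⟨Z', ⟨?_, ?_⟩, fun i => rfl, fun i j _ => rfl⟩
    · ext i j
      exact isEmptyElim i
    · intro x
      have : x = 0 := Finsupp.ext (fun i => isEmptyElim i)
      simp [this]
  | succ n ih =>
    intro V _ _ G hcard hG Z' hsym hclq
    classical
    rcases Nat.lt_or_ge n (Fintype.card V) with hlt | hle
    swap
    · exact ih V G hle hG Z' hsym hclq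
    haveI hne : Nonempty V := Fintype.card_pos_iff.mp (by omega)
    obtain ⟨v, hv⟩ := exists_simpl G hG hne
    set s' : Set V := {w : V | w ≠ v} with hs'def
    set G' : SimpleGraph ↥s' := G.induce s' with hG'def
    have hcard' : Fintype.card ↥s' ≤ n := by
      have : Fintype.card ↥s' < Fintype.card V := by
        refine Fintype.card_lt_of_injective_of_notMem (Subtype.val) Subtype.val_injective
          (b := v) ?_
        rw [Subtype.range_coe]
        simp [hs'def]
      omega
    set Z'' : Matrix ↥s' ↥s' ℝ := Z'.submatrix Subtype.val Subtype.val with hZ''def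
    have hsym'' : Z''.IsSymm := by
      ext i j
      show Z'' j i = Z'' i j
      exact symm_entries hsym _ _
    have hclq'' : ∀ t : Finset ↥s', G'.IsClique ↑t →
        (Z''.submatrix (fun i : t => (i : ↥s')) (fun j : t => (j : ↥s'))).PosSemidef := by
      intro t ht
      set tV : Finset V := t.map ⟨Subtype.val, Subtype.val_injective⟩ with htV
      have hclV : G.IsClique ↑tV := by
        rintro p hp q hq hpq
        simp only [htV, Finset.coe_map, Set.mem_image, Finset.mem_coe,
          Function.Embedding.coeFn_mk] at hp hq
        obtain ⟨p', hp', rfl⟩ := hp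
        obtain ⟨q', hq', rfl⟩ := hq
        exact ht (by exact_mod_cast hp') (by exact_mod_cast hq')
          (fun h => hpq (congrArg Subtype.val h))
      have hpsd := hclq tV hclV
      have hmem : ∀ i : ↥t, (↑(↑i : ↥s') : V) ∈ tV := by
        intro i
        simp [htV]
      have heq : Z''.submatrix (fun i : t => (i : ↥s')) (fun j : t => (j : ↥s')) =
          (Z'.submatrix (fun i : tV => (i : V)) (fun j : tV => (j : V))).submatrix
            (fun i : t => (⟨↑(↑i : ↥s'), hmem i⟩ : ↥tV)) (fun j : t => (⟨↑(↑j : ↥s'), hmem j⟩ : ↥tV)) := by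
        ext i j
        rfl
      rw [heq]
      exact hpsd.submatrix _
    obtain ⟨W, hWpsd, hWdiag, hWedge⟩ := ih ↥s' G' hcard' (chordal_induce hG s') Z'' hsym'' hclq''
    -- neighbours of v
    set N : Set ↥s' := {w : ↥s' | G.Adj v ↑w} with hNdef
    set s₀ : Finset V := insert v (Finset.univ.filter (fun w => G.Adj v w)) with hs₀def
    have hs₀clq : G.IsClique ↑s₀ := by
      intro p hp q hq hpq
      simp only [hs₀def, Finset.coe_insert, Set.mem_insert_iff, Finset.coe_filter,
        Finset.mem_univ, true_and, Set.mem_setOf_eq] at hp hq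
      rcases hp with rfl | hp
      · rcases hq with rfl | hq
        · exact absurd rfl hpq
        · exact hq
      · rcases hq with rfl | hq
        · exact hp.symm
        · exact hv p q hp hq hpq
    have hpsd₀ := hclq s₀ hs₀clq
    have hvmem : v ∈ s₀ := Finset.mem_insert_self _ _
    have hNmem : ∀ p : ↥N, (↑(↑p : ↥s') : V) ∈ s₀ := by
      intro p
      refine Finset.mem_insert_of_mem ?_
      simp only [Finset.mem_filter, Finset.mem_univ, true_and]
      exact p.2
    set d : ℝ := Z' v v with hddef
    set bfull : ↥s' → ℝ := fun w => Z' v ↑w with hbdef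
    set e₀ : Unit ⊕ ↥N → ↥s₀ :=
      Sum.elim (fun _ => ⟨v, hvmem⟩) (fun p => ⟨↑(↑p : ↥s'), hNmem p⟩) with he₀def
    have hbordeq : Blocks.bord d (fun j : ↥N => bfull ↑j)
        (W.submatrix ((↑·) : ↥N → ↥s') ((↑·) : ↥N → ↥s')) =
        (Z'.submatrix (fun i : s₀ => (i : V)) (fun j : s₀ => (j : V))).submatrix e₀ e₀ := by
      rw [Blocks.bord_eq]
      ext i j
      cases i with
      | inl u =>
        cases j with
        | inl u' => rfl
        | inr q => rfl
      | inr p =>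
        cases j with
        | inl u' =>
          show bfull ↑p = Z' ↑(↑p : ↥s') v
          exact (symm_entries hsym _ _).symm
        | inr q =>
          show W ↑p ↑q = Z' ↑(↑p : ↥s') ↑(↑q : ↥s')
          by_cases hpq : (p : ↥s') = (q : ↥s')
          · rw [hpq]
            exact hWdiag ↑q
          · have hadj : G.Adj ↑(↑p : ↥s') ↑(↑q : ↥s') :=
              hv _ _ p.2 q.2 (fun h => hpq (Subtype.ext h))
            exact hWedge ↑p ↑q hadj
    have hbordpsd : (Blocks.bord d (fun j : ↥N => bfull ↑j)
        (W.submatrix ((↑·) : ↥N → ↥s') ((↑·) : ↥N → ↥s'))).PosSemidef := by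
      rw [hbordeq]
      exact hpsd₀.submatrix _
    obtain ⟨c, hcagree, hcpsd⟩ := Blocks.completion_step W hWpsd N bfull d hbordpsd
    set e : V → Unit ⊕ ↥s' := fun i => if h : i = v then Sum.inl () else Sum.inr ⟨i, h⟩
      with hedef
    refine ⟨(Blocks.bord d c W).submatrix e e, hcpsd.submatrix e, ?_, ?_⟩
    · intro i
      show Blocks.bord d c W (e i) (e i) = Z' i i
      by_cases h : i = v
      · rw [hedef]
        simp only [dif_pos h]
        rw [Blocks.bord_eq]
        show d = Z' i i
        rw [hddef, h]
      · rw [hedef]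
        simp only [dif_neg h]
        rw [Blocks.bord_eq]
        show W ⟨i, h⟩ ⟨i, h⟩ = Z' i i
        exact hWdiag ⟨i, h⟩
    · intro i j hadj
      show Blocks.bord d c W (e i) (e j) = Z' i j
      by_cases hi : i = v
      · have hj : j ≠ v := fun hh => by
          rw [hi, hh] at hadj
          exact G.irrefl hadj
        rw [hedef]
        simp only [dif_pos hi, dif_neg hj]
        rw [Blocks.bord_eq]
        show c ⟨j, hj⟩ = Z' i j
        rw [hcagree ⟨j, hj⟩ (show G.Adj v j from hi ▸ hadj)]
        show Z' v j = Z' i j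
        rw [hi]
      · by_cases hj : j = v
        · rw [hedef]
          simp only [dif_pos hj, dif_neg hi]
          rw [Blocks.bord_eq]
          show c ⟨i, hi⟩ = Z' i j
          rw [hcagree ⟨i, hi⟩ (show G.Adj v i from hj ▸ hadj.symm)]
          show Z' v i = Z' i j
          rw [hj]
          exact (symm_entries hsym _ _).symm
        · rw [hedef]
          simp only [dif_neg hi, dif_neg hj]
          rw [Blocks.bord_eq]
          show W ⟨i, hi⟩ ⟨j, hj⟩ = Z' i j
          exact hWedge ⟨i, hi⟩ ⟨j, hj⟩ hadj

end Aux

/-- chordal PSD completion (Grone–Johnson–Sá–Wolkowicz).  The partially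
specified symmetric matrix `Z'` (specified on the diagonal and on edges of the chordal
graph `G`) admits a positive semidefinite completion iff every principal submatrix indexed
by a maximal clique of `G` is positive semidefinite. -/
theorem stmt3 {V : Type} [Fintype V] [DecidableEq V]
    (G : SimpleGraph V) (hG : IsChordal G)
    (Z' : Matrix V V ℝ) (hsymm : Z'.IsSymm) :
    (∃ Z : Matrix V V ℝ, Z.PosSemidef ∧
        (∀ i, Z i i = Z' i i) ∧ (∀ i j, G.Adj i j → Z i j = Z' i j)) ↔
      (∀ s : Finset V, IsMaxClq G (↑s : Set V) →
        (Z'.submatrix (fun i : s => (i : V)) (fun j : s => (j : V))).PosSemidef) := by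
  constructor
  · rintro ⟨Z, hZ, hdiag, hedge⟩ s hs
    have heq : Z'.submatrix (fun i : s => (i : V)) (fun j : s => (j : V)) =
        Z.submatrix (fun i : s => (i : V)) (fun j : s => (j : V)) := by
      ext i j
      show Z' ↑i ↑j = Z ↑i ↑j
      by_cases h : (i : V) = (j : V)
      · rw [h, hdiag]
      · have hadj : G.Adj ↑i ↑j :=
          hs.1 (Finset.mem_coe.mpr i.2) (Finset.mem_coe.mpr j.2) h
        exact (hedge ↑i ↑j hadj).symm
    rw [heq]
    exact hZ.submatrix _
  · intro hmax
    refine Aux.completion (Fintype.card V) V G le_rfl hG Z' hsymm ?_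
    intro s hs
    obtain ⟨t, hst, htmax⟩ := Aux.clique_extend G s hs
    have hpsd := hmax t htmax
    have heq : Z'.submatrix (fun i : s => (i : V)) (fun j : s => (j : V)) =
        (Z'.submatrix (fun i : t => (i : V)) (fun j : t => (j : V))).submatrix
          (fun i : s => (⟨↑i, hst i.2⟩ : ↥t)) (fun j : s => ⟨↑j, hst j.2⟩) := by
      ext i j
      rfl
    rw [heq]
    exact hpsd.submatrix _
end

section
/- Let Z be a symmetric matrix whose sparsity graph G(V,E) is chordal with maximal cliques C₁,…,C_m, each clique containing at least one index where Z has a nonzero diagonal entry forced (e.g., the common index corresponding to the constant 1). Then there exists a completion Z of the specified entries with Z ⪰ 0 and rank(Z) = 1 if and only if every clique principal submatrix satisfies S_{C_i}(Z) ⪰ 0 and rank(S_{C_i}(Z)) = 1 for all i; i.e., the global rank-1 PSD constraint decomposes exactly into per-clique rank-1 PSD constraints. -/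
open Finset

section signs
variable {V : Type} (G' : SimpleGraph V) (σ : V → V → ℝ)

lemma closed_prod_one (hch : IsChordal G')
    (hs1 : ∀ i j, G'.Adj i j → σ i j = 1 ∨ σ i j = -1)
    (hsym : ∀ i j, G'.Adj i j → σ i j = σ j i)
    (htri : ∀ i j k, G'.Adj i j → G'.Adj j k → G'.Adj i k → σ i j * σ j k = σ i k) :
    ∀ n : ℕ, ∀ g : ℕ → V, (∀ k, k < n → G'.Adj (g k) (g (k+1))) → g n = g 0 →
      ∏ k ∈ Finset.range n, σ (g k) (g (k+1)) = 1 := by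
  intro n
  induction n using Nat.strong_induction_on with
  | _ n IH =>
  intro g hadj hcl
  rcases Nat.eq_zero_or_pos n with hn0 | hn1
  · simp [hn0]
  set F : ℕ → ℝ := fun k => σ (g k) (g (k+1)) with hF
  by_cases hdup : ∃ p q, p < q ∧ q < n ∧ g p = g q
  · obtain ⟨p, q, hpq, hqn, hgeq⟩ := hdup
    set l := q - p with hl
    set m := n - l with hm
    have hl1 : 1 ≤ l := by omega
    have hlm : l < n := by omega
    have hmn : m < n := by omega
    -- first closed walk : the loop from p to q
    have h1 : ∏ k ∈ Finset.range l, F (p + k) = 1 := by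
      have hres := IH l hlm (fun k => g (p + k))
        (fun k hk => by
          show G'.Adj (g (p + k)) (g (p + (k + 1)))
          rw [congrArg g (show p + (k+1) = p + k + 1 from by omega)]
          exact hadj (p + k) (by omega))
        (by
          show g (p + l) = g (p + 0)
          rw [show p + l = q from by omega, show p + 0 = p from rfl]
          exact hgeq.symm)
      refine Eq.trans ?_ hres
      exact Finset.prod_congr rfl fun k _ =>
        congrArg (σ (g (p + k))) (congrArg g (by omega))
    -- second closed walk : skip the loop
    set g2 : ℕ → V := fun k => if k ≤ p then g k else g (k + l) with hg2
    have hg2a : ∀ k, k ≤ p → g2 k = g k := fun k hk => by simp [hg2, hk]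
    have hg2b : ∀ k, p < k → g2 k = g (k + l) := fun k hk => by
      have : ¬ (k ≤ p) := by omega
      simp [hg2, this]
    have h2 : ∏ k ∈ Finset.range m, σ (g2 k) (g2 (k+1)) = 1 := by
      apply IH m hmn
      · intro k hk
        rcases lt_trichotomy k p with h | h | h
        · rw [hg2a k (by omega), hg2a (k+1) (by omega)]
          exact hadj k (by omega)
        · subst h
          rw [hg2a k (by omega), hg2b (k+1) (by omega), hgeq,
            congrArg g (show k + 1 + l = q + 1 by omega)]
          exact hadj q hqn
        · rw [hg2b k (by omega), hg2b (k+1) (by omega),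
            congrArg g (show k + 1 + l = k + l + 1 by omega)]
          exact hadj (k + l) (by omega)
      · rw [hg2b m (by omega), hg2a 0 (by omega),
          congrArg g (show m + l = n by omega), hcl]
    -- rewrite the second product
    have key2 : ∏ k ∈ Finset.range m, σ (g2 k) (g2 (k+1)) =
        (∏ k ∈ Finset.range p, F k) * F q * ∏ k ∈ Finset.range (n - q - 1), F (q + 1 + k) := by
      rw [show m = (p + 1) + (n - q - 1) from by omega, Finset.prod_range_add,
        Finset.prod_range_succ]
      congr 1
      · congr 1
        · exact Finset.prod_congr rfl fun k hk => by
            simp only [Finset.mem_range] at hk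
            rw [hg2a k (by omega), hg2a (k+1) (by omega)]
        · rw [hg2a p (by omega), hg2b (p+1) (by omega), hgeq,
            congrArg g (show p + 1 + l = q + 1 by omega)]
      · exact Finset.prod_congr rfl fun k hk => by
          rw [hg2b (p+1+k) (by omega), hg2b (p+1+k+1) (by omega),
            congrArg g (show p+1+k+l = q+1+k by omega),
            congrArg g (show p+1+k+1+l = q+1+k+1 by omega)]
    have split : ∏ k ∈ Finset.range n, F k =
        ((∏ k ∈ Finset.range p, F k) * F q * ∏ k ∈ Finset.range (n - q - 1), F (q + 1 + k)) *
          ∏ k ∈ Finset.range l, F (p + k) := by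
      conv_lhs => rw [show n = p + (l + (1 + (n - q - 1))) from by omega,
        Finset.prod_range_add, Finset.prod_range_add, Finset.prod_range_add]
      rw [Finset.prod_range_one]
      rw [Finset.prod_congr rfl (fun k (_ : k ∈ Finset.range (n - q - 1)) =>
        congrArg F (show p + (l + (1 + k)) = q + 1 + k from by omega))]
      rw [congrArg F (show p + (l + 0) = q from by omega)]
      ring
    rw [split, ← key2, h2, h1]
    norm_num
  · -- no duplicates : injective cycle
    push_neg at hdup
    have hginj : ∀ p q, p < n → q < n → g p = g q → p = q := by
      intro p q hp hq hgpq
      by_contra hne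
      rcases lt_trichotomy p q with h | h | h
      · exact hdup p q h hq hgpq
      · exact hne h
      · exact hdup q p h hp hgpq.symm
    match n, hn1, hadj, hcl, hginj with
    | 1, _, hadj, hcl, hginj =>
        exact absurd (hcl ▸ hadj 0 (by omega)) (G'.loopless.irrefl _)
    | 2, _, hadj, hcl, hginj =>
        have ha01 : G'.Adj (g 0) (g 1) := by simpa using hadj 0 (by omega)
        rw [Finset.prod_range_succ, Finset.prod_range_one]
        norm_num
        rw [show g 2 = g 0 from hcl, ← hsym _ _ ha01]
        rcases hs1 _ _ ha01 with h | h <;> rw [h] <;> norm_num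
    | 3, _, hadj, hcl, hginj =>
        have ha01 : G'.Adj (g 0) (g 1) := by simpa using hadj 0 (by omega)
        have ha12 : G'.Adj (g 1) (g 2) := by simpa using hadj 1 (by omega)
        have ha20 : G'.Adj (g 2) (g 0) := by
          have h := hadj 2 (by omega)
          norm_num at h
          rwa [hcl] at h
        have ha02 := ha20.symm
        rw [Finset.prod_range_succ, Finset.prod_range_succ, Finset.prod_range_one]
        norm_num
        rw [show g 3 = g 0 from hcl, htri _ _ _ ha01 ha12 ha02, ← hsym _ _ ha02]
        rcases hs1 _ _ ha02 with h | h <;> rw [h] <;> norm_num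
    | (nn+4), _, hadj, hcl, hginj =>
        set N := nn + 4 with hN
        have hN4 : 4 ≤ N := by omega
        haveI : NeZero N := ⟨by omega⟩
        set f : ZMod N → V := fun i => g i.val with hf
        have hfinj : Function.Injective f := by
          intro i j hij
          exact ZMod.val_injective N (hginj _ _ (ZMod.val_lt i) (ZMod.val_lt j) hij)
        have hval1 : (1 : ZMod N).val = 1 := ZMod.val_one'' (by omega)
        have hvadd : ∀ i : ZMod N, (i + 1).val = (i.val + 1) % N := by
          intro i
          rw [ZMod.val_add, hval1]
        have hfadj : ∀ i, G'.Adj (f i) (f (i+1)) := by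
          intro i
          have hiv := ZMod.val_lt i
          show G'.Adj (g i.val) (g (i+1).val)
          rcases Nat.lt_or_ge (i.val + 1) N with h | h
          · rw [show (i + 1).val = i.val + 1 from by rw [hvadd, Nat.mod_eq_of_lt h]]
            exact hadj i.val (by omega)
          · rw [show (i + 1).val = 0 from by
              rw [hvadd, show i.val + 1 = N from by omega, Nat.mod_self]]
            rw [show i.val = N - 1 from by omega, ← hcl]
            exact hadj (N-1) (by omega)
        obtain ⟨i, j, hij, hji1, hij1, hchord⟩ := hch N hN4 f hfinj hfadj
        -- main splitting argument for a chord between positions a < b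
        have key : ∀ a b : ℕ, a < b → b < N → a + 2 ≤ b → (1 ≤ a ∨ b + 2 ≤ N) →
            G'.Adj (g a) (g b) → ∏ k ∈ Finset.range N, F k = 1 := by
          intro a b hab hbN hab2 hcor hchrd
          set l1 := b - a + 1 with hl1
          set l2 := N - (b - a) + 1 with hl2
          set g1 : ℕ → V := fun k => if k ≤ b - a then g (a + k) else g a with hg1
          have hg1a : ∀ k, k ≤ b - a → g1 k = g (a + k) := fun k hk => by simp [hg1, hk]
          have hg1b : ∀ k, b - a < k → g1 k = g a := fun k hk => by
            have : ¬ (k ≤ b - a) := by omega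
            simp [hg1, this]
          set g2 : ℕ → V := fun k => if k ≤ a then g k else g (k + (b - a) - 1) with hg2
          have hg2a : ∀ k, k ≤ a → g2 k = g k := fun k hk => by simp [hg2, hk]
          have hg2b : ∀ k, a < k → g2 k = g (k + (b - a) - 1) := fun k hk => by
            have : ¬ (k ≤ a) := by omega
            simp [hg2, this]
          have h1 : ∏ k ∈ Finset.range l1, σ (g1 k) (g1 (k+1)) = 1 := by
            apply IH l1 (by omega)
            · intro k hk
              rcases Nat.lt_or_ge k (b - a) with h | h
              · rw [hg1a k (by omega), hg1a (k+1) (by omega),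
                  congrArg g (show a + (k+1) = a + k + 1 by omega)]
                exact hadj (a + k) (by omega)
              · rw [hg1a k (by omega), hg1b (k+1) (by omega),
                  congrArg g (show a + k = b by omega)]
                exact hchrd.symm
            · rw [hg1b l1 (by omega), hg1a 0 (by omega), Nat.add_zero]
          have h2 : ∏ k ∈ Finset.range l2, σ (g2 k) (g2 (k+1)) = 1 := by
            apply IH l2 (by omega)
            · intro k hk
              rcases lt_trichotomy k a with h | h | h
              · rw [hg2a k (by omega), hg2a (k+1) (by omega)]
                exact hadj k (by omega)
              · rw [hg2a k (by omega), hg2b (k+1) (by omega),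
                  congrArg g (show k + 1 + (b - a) - 1 = b by omega), h]
                exact hchrd
              · rw [hg2b k (by omega), hg2b (k+1) (by omega),
                  congrArg g (show k + 1 + (b - a) - 1 = k + (b - a) - 1 + 1 by omega)]
                exact hadj (k + (b - a) - 1) (by omega)
            · rw [hg2b l2 (by omega), hg2a 0 (by omega),
                congrArg g (show l2 + (b - a) - 1 = N by omega), hcl]
          have key1 : ∏ k ∈ Finset.range l1, σ (g1 k) (g1 (k+1)) =
              (∏ k ∈ Finset.range (b - a), F (a + k)) * σ (g b) (g a) := by
            rw [hl1, Finset.prod_range_succ]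
            congr 1
            · exact Finset.prod_congr rfl fun k hk => by
                simp only [Finset.mem_range] at hk
                rw [hg1a k (by omega), hg1a (k+1) (by omega),
                  congrArg g (show a + (k+1) = a + k + 1 by omega)]
            · rw [hg1a (b-a) (by omega), hg1b (b-a+1) (by omega),
                congrArg g (show a + (b - a) = b by omega)]
          have key2 : ∏ k ∈ Finset.range l2, σ (g2 k) (g2 (k+1)) =
              (∏ k ∈ Finset.range a, F k) * σ (g a) (g b) *
                ∏ k ∈ Finset.range (N - b), F (b + k) := by
            rw [show l2 = (a + 1) + (N - b) from by omega, Finset.prod_range_add,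
              Finset.prod_range_succ]
            congr 1
            · congr 1
              · exact Finset.prod_congr rfl fun k hk => by
                  simp only [Finset.mem_range] at hk
                  rw [hg2a k (by omega), hg2a (k+1) (by omega)]
              · rw [hg2a a (by omega), hg2b (a+1) (by omega),
                  congrArg g (show a + 1 + (b - a) - 1 = b by omega)]
            · exact Finset.prod_congr rfl fun k hk => by
                rw [hg2b (a+1+k) (by omega), hg2b (a+1+k+1) (by omega),
                  congrArg g (show a+1+k+(b-a)-1 = b+k by omega),
                  congrArg g (show a+1+k+1+(b-a)-1 = b+k+1 by omega)]
          have split : ∏ k ∈ Finset.range N, F k =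
              (∏ k ∈ Finset.range a, F k) * (∏ k ∈ Finset.range (b - a), F (a + k)) *
                ∏ k ∈ Finset.range (N - b), F (b + k) := by
            conv_lhs => rw [show N = a + ((b - a) + (N - b)) from by omega,
              Finset.prod_range_add, Finset.prod_range_add]
            rw [Finset.prod_congr rfl (fun k (_ : k ∈ Finset.range (N - b)) =>
              congrArg F (show a + (b - a + k) = b + k from by omega))]
            ring
          have hss : σ (g a) (g b) * σ (g b) (g a) = 1 := by
            rw [← hsym _ _ hchrd]
            rcases hs1 _ _ hchrd with h | h <;> rw [h] <;> norm_num
          rw [key1] at h1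
          rw [key2] at h2
          set X := ∏ k ∈ Finset.range a, F k
          set Y := ∏ k ∈ Finset.range (b - a), F (a + k)
          set W := ∏ k ∈ Finset.range (N - b), F (b + k)
          set s := σ (g a) (g b)
          set t := σ (g b) (g a)
          rw [split]
          have hmm : (Y * t) * (X * s * W) = X * Y * W * (s * t) := by ring
          rw [h1, h2, hss, mul_one] at hmm
          linarith [hmm]
        -- apply key with the chord sorted
        have hvi := ZMod.val_lt i
        have hvj := ZMod.val_lt j
        have hane : i.val ≠ j.val := fun h => hij (ZMod.val_injective N h)
        rcases lt_or_gt_of_ne hane with hab | hab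
        · have hb2 : i.val + 2 ≤ j.val := by
            by_contra hcon
            apply hji1
            apply ZMod.val_injective N
            rw [hvadd, Nat.mod_eq_of_lt (by omega)]
            omega
          have hcor : 1 ≤ i.val ∨ j.val + 2 ≤ N := by
            by_contra hcon
            push_neg at hcon
            apply hij1
            apply ZMod.val_injective N
            rw [hvadd, show j.val + 1 = N from by omega, Nat.mod_self]
            omega
          exact key i.val j.val hab hvj hb2 hcor hchord
        · have hb2 : j.val + 2 ≤ i.val := by
            by_contra hcon
            apply hij1
            apply ZMod.val_injective N
            rw [hvadd, Nat.mod_eq_of_lt (by omega)]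
            omega
          have hcor : 1 ≤ j.val ∨ i.val + 2 ≤ N := by
            by_contra hcon
            push_neg at hcon
            apply hji1
            apply ZMod.val_injective N
            rw [hvadd, show i.val + 1 = N from by omega, Nat.mod_self]
            omega
          exact key j.val i.val hab hvi hb2 hcor hchord.symm

end signs

section eps
variable {V : Type} {G' : SimpleGraph V}

noncomputable def wprod (σ : V → V → ℝ) : ∀ {a b : V}, G'.Walk a b → ℝ
  | _, _, SimpleGraph.Walk.nil => 1
  | _, _, @SimpleGraph.Walk.cons _ _ a c _ _ p => σ a c * wprod σ p

variable (σ : V → V → ℝ)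

@[simp] lemma wprod_nil (a : V) : wprod σ (SimpleGraph.Walk.nil : G'.Walk a a) = 1 := rfl

@[simp] lemma wprod_cons {a c b : V} (h : G'.Adj a c) (p : G'.Walk c b) :
    wprod σ (SimpleGraph.Walk.cons h p) = σ a c * wprod σ p := rfl

lemma wprod_copy {a b a' b' : V} (p : G'.Walk a b) (ha : a = a') (hb : b = b') :
    wprod σ (p.copy ha hb) = wprod σ p := by subst ha; subst hb; rfl

lemma wprod_append {a b c : V} (p : G'.Walk a b) (q : G'.Walk b c) :
    wprod σ (p.append q) = wprod σ p * wprod σ q := by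
  induction p with
  | nil => simp
  | cons h p ih => simp [SimpleGraph.Walk.cons_append, ih, mul_assoc]

lemma wprod_pm (hs1 : ∀ i j, G'.Adj i j → σ i j = 1 ∨ σ i j = -1)
    {a b : V} (p : G'.Walk a b) : wprod σ p = 1 ∨ wprod σ p = -1 := by
  induction p with
  | nil => left; rfl
  | cons h p ih =>
      rw [wprod_cons]
      rcases hs1 _ _ h with h1 | h1 <;> rcases ih with h2 | h2 <;> rw [h1, h2] <;> norm_num

lemma wprod_reverse (hsym : ∀ i j, G'.Adj i j → σ i j = σ j i)
    {a b : V} (p : G'.Walk a b) : wprod σ p.reverse = wprod σ p := by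
  induction p with
  | nil => simp
  | cons h p ih =>
      rw [SimpleGraph.Walk.reverse_cons, wprod_append, ih, wprod_cons, wprod_nil,
        wprod_cons, hsym _ _ h]
      ring

lemma wprod_eq_prod {a b : V} (p : G'.Walk a b) :
    wprod σ p = ∏ k ∈ Finset.range p.length, σ (p.getVert k) (p.getVert (k+1)) := by
  induction p with
  | nil => simp
  | cons h p ih =>
      rw [wprod_cons, ih, SimpleGraph.Walk.length_cons, Finset.prod_range_succ']
      simp only [SimpleGraph.Walk.getVert_cons_succ, SimpleGraph.Walk.getVert_zero]
      ring

lemma wprod_closed (hch : IsChordal G')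
    (hs1 : ∀ i j, G'.Adj i j → σ i j = 1 ∨ σ i j = -1)
    (hsym : ∀ i j, G'.Adj i j → σ i j = σ j i)
    (htri : ∀ i j k, G'.Adj i j → G'.Adj j k → G'.Adj i k → σ i j * σ j k = σ i k)
    {a : V} (p : G'.Walk a a) : wprod σ p = 1 := by
  rw [wprod_eq_prod]
  apply closed_prod_one G' σ hch hs1 hsym htri p.length p.getVert
  · intro k hk
    exact p.adj_getVert_succ hk
  · rw [p.getVert_length, p.getVert_zero]

lemma wprod_unique (hch : IsChordal G')
    (hs1 : ∀ i j, G'.Adj i j → σ i j = 1 ∨ σ i j = -1)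
    (hsym : ∀ i j, G'.Adj i j → σ i j = σ j i)
    (htri : ∀ i j k, G'.Adj i j → G'.Adj j k → G'.Adj i k → σ i j * σ j k = σ i k)
    {a b : V} (p q : G'.Walk a b) : wprod σ p = wprod σ q := by
  have h := wprod_closed σ hch hs1 hsym htri (p.append q.reverse)
  rw [wprod_append, wprod_reverse σ hsym] at h
  rcases wprod_pm σ hs1 q with h1 | h1 <;> rcases wprod_pm σ hs1 p with h2 | h2 <;>
    rw [h1, h2] at h <;> rw [h1, h2] <;> simp_all

/-- Existence of a consistent sign assignment. -/
lemma exists_eps (hch : IsChordal G')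
    (hs1 : ∀ i j, G'.Adj i j → σ i j = 1 ∨ σ i j = -1)
    (hsym : ∀ i j, G'.Adj i j → σ i j = σ j i)
    (htri : ∀ i j k, G'.Adj i j → G'.Adj j k → G'.Adj i k → σ i j * σ j k = σ i k) :
    ∃ ε : V → ℝ, (∀ i, ε i = 1 ∨ ε i = -1) ∧ ∀ i j, G'.Adj i j → ε i * ε j = σ i j := by
  classical
  have hreach : ∀ i : V, G'.Reachable (Quot.out (G'.connectedComponentMk i)) i := by
    intro i
    apply SimpleGraph.ConnectedComponent.exact
    exact Quot.out_eq _
  refine ⟨fun i => wprod σ (hreach i).some, fun i => wprod_pm σ hs1 _, ?_⟩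
  intro i j hij
  have hcomp : G'.connectedComponentMk i = G'.connectedComponentMk j :=
    SimpleGraph.ConnectedComponent.sound hij.reachable
  have hroot : Quot.out (G'.connectedComponentMk i) = Quot.out (G'.connectedComponentMk j) := by
    rw [hcomp]
  have hwj : wprod σ (hreach j).some = wprod σ (hreach i).some * σ i j := by
    rw [wprod_unique σ hch hs1 hsym htri (hreach j).some
      (((hreach i).some.concat hij).copy hroot rfl)]
    rw [wprod_copy, SimpleGraph.Walk.concat_eq_append, wprod_append, wprod_cons, wprod_nil]
    ring
  show wprod σ (hreach i).some * wprod σ (hreach j).some = σ i j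
  rw [hwj]
  rcases wprod_pm σ hs1 (hreach i).some with h1 | h1 <;> rw [h1] <;> ring

end eps

open Matrix Finset
variable {n : Type} [Fintype n] [DecidableEq n]

lemma vvt_psd (v : n → ℝ) : (vecMulVec v v).PosSemidef := by
  refine Matrix.PosSemidef.of_dotProduct_mulVec_nonneg ?_ ?_
  · ext i j
    simp [Matrix.conjTranspose_apply, vecMulVec_apply, mul_comm]
  · intro x
    have h : star x ⬝ᵥ (vecMulVec v v *ᵥ x) = (∑ i, v i * x i) * (∑ i, v i * x i) := by
      simp only [star_trivial, dotProduct, mulVec, vecMulVec_apply, Finset.sum_mul,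
        Finset.mul_sum]
      rw [Finset.sum_comm]
      apply Finset.sum_congr rfl; intro i _
      apply Finset.sum_congr rfl; intro j _
      ring
    rw [h]
    exact mul_self_nonneg _

lemma vvt_rank (v : n → ℝ) (hv : v ≠ 0) : (vecMulVec v v).rank = 1 := by
  have hmv : ∀ x : n → ℝ, (vecMulVec v v).mulVecLin x = (∑ j, v j * x j) • v := by
    intro x; ext i
    simp only [mulVecLin_apply, mulVec, dotProduct, vecMulVec_apply, Pi.smul_apply,
      smul_eq_mul, Finset.sum_mul]
    exact Finset.sum_congr rfl fun j _ => by ring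
  have hrange : LinearMap.range (vecMulVec v v).mulVecLin = Submodule.span ℝ {v} := by
    apply le_antisymm
    · rintro y ⟨x, rfl⟩
      rw [hmv]
      exact Submodule.smul_mem _ _ (Submodule.mem_span_singleton_self v)
    · rw [Submodule.span_singleton_le_iff_mem]
      have hc : (0:ℝ) < ∑ j, v j * v j := by
        obtain ⟨i, hi⟩ := Function.ne_iff.mp hv
        apply Finset.sum_pos' (fun j _ => mul_self_nonneg _)
        exact ⟨i, Finset.mem_univ i, mul_self_pos.mpr hi⟩
      refine ⟨(∑ j, v j * v j)⁻¹ • v, ?_⟩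
      rw [LinearMap.map_smul, hmv, smul_smul, inv_mul_cancel₀ hc.ne', one_smul]
  rw [Matrix.rank, hrange, finrank_span_singleton hv]

lemma psd_rank_one_decomp_s13 {A : Matrix n n ℝ} (hA : A.PosSemidef) (hr : A.rank = 1) :
    ∃ w : n → ℝ, A = vecMulVec w w := by
  have hsymm : ∀ i j, A j i = A i j := by
    intro i j
    have := hA.1
    rw [Matrix.IsHermitian] at this
    conv_rhs => rw [← this]
    simp [Matrix.conjTranspose_apply]
  have hdiag : ∀ i, 0 ≤ A i i := by
    intro i
    have := hA.dotProduct_mulVec_nonneg (Pi.single i 1)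
    simpa [dotProduct, mulVec, Pi.single_apply, Finset.sum_ite_eq', Finset.mul_sum] using this
  have hA0 : A ≠ 0 := by
    intro h; rw [h] at hr; rw [Matrix.rank_zero] at hr; exact one_ne_zero hr.symm
  obtain ⟨i0, j0, hij0⟩ : ∃ i j, A i j ≠ 0 := by
    by_contra hcon
    push_neg at hcon
    exact hA0 (Matrix.ext fun i j => hcon i j)
  set u : n → ℝ := Aᵀ j0 with hu
  have hu0 : u ≠ 0 := by
    intro h
    exact hij0 (by rw [show A i0 j0 = u i0 from rfl, h]; rfl)
  have hspan : Submodule.span ℝ {u} = Submodule.span ℝ (Set.range Aᵀ) := by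
    apply Submodule.eq_of_le_of_finrank_le
    · rw [Submodule.span_singleton_le_iff_mem]
      exact Submodule.subset_span ⟨j0, rfl⟩
    · change Module.finrank ℝ (Submodule.span ℝ (Set.range A.col)) ≤ _
      rw [← Matrix.rank_eq_finrank_span_cols, hr, finrank_span_singleton hu0]
  have hcols : ∀ j, ∃ c : ℝ, Aᵀ j = c • u := by
    intro j
    have : Aᵀ j ∈ Submodule.span ℝ {u} := by
      rw [hspan]; exact Submodule.subset_span ⟨j, rfl⟩
    obtain ⟨c, hc⟩ := Submodule.mem_span_singleton.mp this
    exact ⟨c, hc.symm⟩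
  choose c hc using hcols
  have hAc : ∀ i j, A i j = c j * u i := by
    intro i j
    have := congrFun (hc j) i
    simpa using this
  have hui0 : u i0 ≠ 0 := by
    intro h
    apply hij0
    rw [hAc i0 j0, h, mul_zero]
  set d : ℝ := c i0 / u i0 with hd
  have hcd : ∀ i, c i = d * u i := by
    intro i
    have h1 : c i0 * u i = c i * u i0 := by
      rw [← hAc i i0, hsymm, hAc i0 i]
    rw [hd, div_mul_eq_mul_div, eq_div_iff hui0]
    linarith [h1]
  have hAd : ∀ i j, A i j = d * u i * u j := by
    intro i j
    rw [hAc, hcd]; ring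
  have hd0 : 0 ≤ d := by
    have := hdiag i0
    rw [hAd i0 i0] at this
    have h2 : 0 < u i0 * u i0 := mul_self_pos.mpr hui0
    nlinarith
  have hdne : d ≠ 0 := by
    intro h
    apply hij0
    rw [hAd, h]; ring
  refine ⟨fun i => Real.sqrt d * u i, ?_⟩
  ext i j
  have hsq : Real.sqrt d * Real.sqrt d = d := Real.mul_self_sqrt hd0
  rw [vecMulVec_apply, hAd i j]
  have h3 : Real.sqrt d * u i * (Real.sqrt d * u j) = Real.sqrt d * Real.sqrt d * (u i * u j) := by
    ring
  rw [h3, hsq]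
  ring

section main
open Matrix

lemma clique_extend {V : Type} [Fintype V] [DecidableEq V] (G : SimpleGraph V)
    (s : Finset V) (hs : G.IsClique ↑s) :
    ∃ t : Finset V, s ⊆ t ∧ IsMaxClq G ↑t := by
  classical
  set S : Finset (Finset V) := Finset.univ.filter (fun t => G.IsClique ↑t ∧ s ⊆ t) with hS
  have hSne : S.Nonempty := ⟨s, by simp [hS, hs]⟩
  obtain ⟨t, htS, htmax⟩ := S.exists_max_image Finset.card hSne
  simp only [hS, Finset.mem_filter, Finset.mem_univ, true_and] at htS
  refine ⟨t, htS.2, htS.1, ?_⟩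
  intro u hu hsub
  have hfin : u.Finite := Set.toFinite u
  have htu : t ⊆ hfin.toFinset := by
    intro x hx
    rw [Set.Finite.mem_toFinset]
    exact hsub hx
  have huS : hfin.toFinset ∈ S := by
    simp only [hS, Finset.mem_filter, Finset.mem_univ, true_and]
    constructor
    · rwa [Set.Finite.coe_toFinset]
    · exact htS.2.trans htu
  have hcard := htmax _ huS
  have heq : t = hfin.toFinset := Finset.eq_of_subset_of_card_le htu hcard
  rw [heq, Set.Finite.coe_toFinset]

lemma tri_helper (x y z : ℝ) (hx : x ≠ 0) (hy : y ≠ 0) (hz : z ≠ 0) :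
    (x*y)/(|x| * |y|) * ((y*z)/(|y| * |z|)) = (x*z)/(|x| * |z|) := by
  have hax : |x| ≠ 0 := abs_ne_zero.mpr hx
  have hay : |y| ≠ 0 := abs_ne_zero.mpr hy
  have haz : |z| ≠ 0 := abs_ne_zero.mpr hz
  rw [div_mul_div_comm, div_eq_div_iff (by positivity) (by positivity)]
  have h2 : |y| * |y| = y * y := abs_mul_abs_self y
  linear_combination (-(x * z * |x| * |z|)) * h2

/-- exact decomposition of the global rank-1 PSD constraint into per-clique
rank-1 PSD constraints, for a chordal sparsity pattern in which every maximal clique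
contains an index with a nonzero specified diagonal entry. -/
theorem stmt13 {V : Type} [Fintype V] [DecidableEq V]
    (G : SimpleGraph V) (hG : IsChordal G)
    (Z' : Matrix V V ℝ) (hsymm : Z'.IsSymm)
    (hnz : ∀ s : Finset V, IsMaxClq G (↑s : Set V) → ∃ i ∈ s, Z' i i ≠ 0) :
    (∃ Z : Matrix V V ℝ, Z.PosSemidef ∧ Z.rank = 1 ∧
        (∀ i, Z i i = Z' i i) ∧ (∀ i j, G.Adj i j → Z i j = Z' i j)) ↔
      (∀ s : Finset V, IsMaxClq G (↑s : Set V) →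
        (Z'.submatrix (fun i : s => (i : V)) (fun j : s => (j : V))).PosSemidef ∧
        (Z'.submatrix (fun i : s => (i : V)) (fun j : s => (j : V))).rank = 1) := by
  classical
  constructor
  · rintro ⟨Z, hpsd, hrk, hdiag, hedge⟩ s hs
    obtain ⟨w, hw⟩ := psd_rank_one_decomp_s13 hpsd hrk
    have hsub : Z'.submatrix (fun i : s => (i : V)) (fun j : s => (j : V)) =
        vecMulVec (fun i : s => w i) (fun j : s => w j) := by
      ext ⟨i, hi⟩ ⟨j, hj⟩
      rw [Matrix.submatrix_apply, Matrix.vecMulVec_apply]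
      by_cases hij : i = j
      · subst hij
        rw [← hdiag i, hw, Matrix.vecMulVec_apply]
      · have hadj : G.Adj i j := hs.1 (Finset.mem_coe.mpr hi) (Finset.mem_coe.mpr hj) hij
        rw [← hedge i j hadj, hw, Matrix.vecMulVec_apply]
    constructor
    · rw [hsub]; exact vvt_psd _
    · rw [hsub]
      apply vvt_rank
      obtain ⟨i, hi, hne⟩ := hnz s hs
      intro h0
      apply hne
      have : w i * w i = 0 := by
        have := congrFun h0 (⟨i, hi⟩ : s)
        simp only [Pi.zero_apply] at this
        rw [this, zero_mul]
      rw [← hdiag i, hw, Matrix.vecMulVec_apply] at *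
      exact this
  · intro h
    -- extract rank-one decompositions of all maximal-clique submatrices
    have hw : ∀ s : Finset V, IsMaxClq G (↑s : Set V) → ∃ w : s → ℝ,
        ∀ i j (hi : i ∈ s) (hj : j ∈ s), Z' i j = w ⟨i, hi⟩ * w ⟨j, hj⟩ := by
      intro s hs
      obtain ⟨hpsd, hrk⟩ := h s hs
      obtain ⟨w, hww⟩ := psd_rank_one_decomp_s13 hpsd hrk
      refine ⟨w, fun i j hi hj => ?_⟩
      have := congrFun (congrFun hww ⟨i, hi⟩) ⟨j, hj⟩
      simpa [Matrix.submatrix_apply, Matrix.vecMulVec_apply] using this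
    -- basic entry facts
    have E1 : ∀ i : V, 0 ≤ Z' i i := by
      intro i
      obtain ⟨t, hsub, htm⟩ := clique_extend G {i} (by simp)
      obtain ⟨w, hwt⟩ := hw t htm
      have hi : i ∈ t := hsub (Finset.mem_singleton_self i)
      rw [hwt i i hi hi]
      exact mul_self_nonneg _
    have E2 : ∀ i j, G.Adj i j → Z' i j * Z' i j = Z' i i * Z' j j := by
      intro i j hij
      obtain ⟨t, hsub, htm⟩ := clique_extend G {i, j} (by
        rw [Finset.coe_insert, Finset.coe_singleton]
        exact SimpleGraph.isClique_pair.mpr fun _ => hij)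
      obtain ⟨w, hwt⟩ := hw t htm
      have hi : i ∈ t := hsub (by simp)
      have hj : j ∈ t := hsub (by simp)
      rw [hwt i j hi hj, hwt i i hi hi, hwt j j hj hj]
      ring
    have E3 : ∀ i j, G.Adj i j → Z' i i = 0 → Z' i j = 0 := by
      intro i j hij h0
      have := E2 i j hij
      rw [h0, zero_mul] at this
      exact mul_self_eq_zero.mp this
    -- the restriction of G to vertices with nonzero diagonal
    set G2 : SimpleGraph V :=
      { Adj := fun i j => G.Adj i j ∧ Z' i i ≠ 0 ∧ Z' j j ≠ 0
        symm := ⟨fun i j h => ⟨h.1.symm, h.2.2, h.2.1⟩⟩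
        loopless := ⟨fun i hc => G.loopless.irrefl i hc.1⟩ } with hG2
    have hG2adj : ∀ i j, G2.Adj i j ↔ G.Adj i j ∧ Z' i i ≠ 0 ∧ Z' j j ≠ 0 := fun i j => Iff.rfl
    have hch2 : IsChordal G2 := by
      intro n hn f hf hadj
      obtain ⟨i, j, h1, h2, h3, hadj'⟩ := hG n hn f hf (fun i => ((hG2adj _ _).mp (hadj i)).1)
      exact ⟨i, j, h1, h2, h3, (hG2adj _ _).mpr
        ⟨hadj', ((hG2adj _ _).mp (hadj i)).2.1, ((hG2adj _ _).mp (hadj j)).2.1⟩⟩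
    set σ : V → V → ℝ :=
      fun i j => Z' i j / (Real.sqrt (Z' i i) * Real.sqrt (Z' j j)) with hσ
    have hsqrtpos : ∀ i : V, Z' i i ≠ 0 → 0 < Real.sqrt (Z' i i) := by
      intro i hne
      exact Real.sqrt_pos.mpr (lt_of_le_of_ne (E1 i) (Ne.symm hne))
    have hs1 : ∀ i j, G2.Adj i j → σ i j = 1 ∨ σ i j = -1 := by
      intro i j hij
      obtain ⟨hadj, hi, hj⟩ := (hG2adj _ _).mp hij
      have hsi := hsqrtpos i hi
      have hsj := hsqrtpos j hj
      apply mul_self_eq_one_iff.mp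
      rw [hσ]
      simp only []
      rw [div_mul_div_comm, E2 i j hadj]
      rw [show Real.sqrt (Z' i i) * Real.sqrt (Z' j j) *
          (Real.sqrt (Z' i i) * Real.sqrt (Z' j j)) =
          (Real.sqrt (Z' i i) * Real.sqrt (Z' i i)) *
          (Real.sqrt (Z' j j) * Real.sqrt (Z' j j)) from by ring]
      rw [Real.mul_self_sqrt (E1 i), Real.mul_self_sqrt (E1 j)]
      exact div_self (by positivity)
    have hsym : ∀ i j, G2.Adj i j → σ i j = σ j i := by
      intro i j _
      rw [hσ]
      simp only []
      rw [hsymm.apply i j, mul_comm]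
    have htri : ∀ i j k, G2.Adj i j → G2.Adj j k → G2.Adj i k → σ i j * σ j k = σ i k := by
      intro i j k hij hjk hik
      obtain ⟨haij, hi, hj⟩ := (hG2adj _ _).mp hij
      obtain ⟨hajk, _, hk⟩ := (hG2adj _ _).mp hjk
      obtain ⟨haik, _, _⟩ := (hG2adj _ _).mp hik
      obtain ⟨t, hsub, htm⟩ := clique_extend G {i, j, k} (by
        rw [Finset.coe_insert, Finset.coe_insert, Finset.coe_singleton]
        rw [SimpleGraph.isClique_insert]
        constructor
        · exact SimpleGraph.isClique_pair.mpr fun _ => hajk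
        · intro b hb hne
          rcases hb with hb | hb
          · subst hb; exact haij
          · rw [Set.mem_singleton_iff] at hb; subst hb; exact haik)
      obtain ⟨w, hwt⟩ := hw t htm
      have hit : i ∈ t := hsub (by simp)
      have hjt : j ∈ t := hsub (by simp)
      have hkt : k ∈ t := hsub (by simp)
      set wi := w ⟨i, hit⟩
      set wj := w ⟨j, hjt⟩
      set wk := w ⟨k, hkt⟩
      have hwi : wi ≠ 0 := by
        intro hc
        apply hi
        rw [hwt i i hit hit, show w ⟨i, hit⟩ = wi from rfl, hc, mul_zero]
      have hwj : wj ≠ 0 := by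
        intro hc
        apply hj
        rw [hwt j j hjt hjt, show w ⟨j, hjt⟩ = wj from rfl, hc, mul_zero]
      have hwk : wk ≠ 0 := by
        intro hc
        apply hk
        rw [hwt k k hkt hkt, show w ⟨k, hkt⟩ = wk from rfl, hc, mul_zero]
      have hform : ∀ (x y : V) (hx : x ∈ t) (hy : y ∈ t),
          σ x y = (w ⟨x, hx⟩ * w ⟨y, hy⟩) / (|w ⟨x, hx⟩| * |w ⟨y, hy⟩|) := by
        intro x y hx hy
        rw [hσ]
        simp only []
        rw [hwt x y hx hy, hwt x x hx hx, hwt y y hy hy,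
          Real.sqrt_mul_self_eq_abs, Real.sqrt_mul_self_eq_abs]
      rw [hform i j hit hjt, hform j k hjt hkt, hform i k hit hkt]
      exact tri_helper wi wj wk hwi hwj hwk
    obtain ⟨ε, hε1, hε2⟩ := exists_eps σ hch2 hs1 hsym htri
    set v : V → ℝ := fun i => ε i * Real.sqrt (Z' i i) with hv
    have hveq : ∀ i, v i * v i = Z' i i := by
      intro i
      rw [hv]
      simp only []
      rw [show ε i * Real.sqrt (Z' i i) * (ε i * Real.sqrt (Z' i i)) =
        (ε i * ε i) * (Real.sqrt (Z' i i) * Real.sqrt (Z' i i)) from by ring]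
      rw [Real.mul_self_sqrt (E1 i)]
      rcases hε1 i with h1 | h1 <;> rw [h1] <;> ring
    refine ⟨vecMulVec v v, vvt_psd v, ?_, ?_, ?_⟩
    · apply vvt_rank
      -- v ≠ 0 : take any maximal clique
      have hVne : Nonempty V := by
        rcases isEmpty_or_nonempty V with hV | hV
        · exfalso
          have hmax : IsMaxClq G ((↑(∅ : Finset V)) : Set V) := by
            constructor
            · simp [SimpleGraph.isClique_empty]
            · intro u _ _
              simp only [Finset.coe_empty]
              ext x
              exact absurd trivial (by exact fun _ => (IsEmpty.false x).elim)
          obtain ⟨i, hi, _⟩ := hnz ∅ hmax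
          exact absurd hi (by simp)
        · exact hV
      obtain ⟨x⟩ := hVne
      obtain ⟨t, hsub, htm⟩ := clique_extend G {x} (by simp)
      obtain ⟨i, hi, hne⟩ := hnz t htm
      intro h0
      apply hne
      rw [← hveq i]
      have := congrFun h0 i
      simp only [Pi.zero_apply] at this
      rw [this, zero_mul]
    · intro i
      rw [Matrix.vecMulVec_apply, hveq i]
    · intro i j hij
      rw [Matrix.vecMulVec_apply]
      by_cases hi : Z' i i = 0
      · have hvz : v i = 0 := by
          rw [hv]; simp only []; rw [hi, Real.sqrt_zero, mul_zero]
        rw [hvz, zero_mul, E3 i j hij hi]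
      by_cases hj : Z' j j = 0
      · have hvz : v j = 0 := by
          rw [hv]; simp only []; rw [hj, Real.sqrt_zero, mul_zero]
        rw [hvz, mul_zero]
        rw [← hsymm.apply i j]
        rw [E3 j i hij.symm hj]
      · have hadj2 : G2.Adj i j := (hG2adj _ _).mpr ⟨hij, hi, hj⟩
        have hεij := hε2 i j hadj2
        rw [hv]
        simp only []
        rw [show ε i * Real.sqrt (Z' i i) * (ε j * Real.sqrt (Z' j j)) =
          (ε i * ε j) * (Real.sqrt (Z' i i) * Real.sqrt (Z' j j)) from by ring]
        rw [hεij, hσ]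
        simp only []
        rw [div_mul_cancel₀]
        exact mul_ne_zero (hsqrtpos i hi).ne' (hsqrtpos j hj).ne'

end main
end

section
/- Let G_n(N, B) be a graph and construct G by taking n_c+1 disjoint copies of G_n (one per collocation point), adding edges so that the copies of each vertex across all collocation points are pairwise adjacent and any two vertices in different copies are adjacent whenever their underlying vertices are adjacent or equal in G_n, and adding one extra vertex v* adjacent to everything. Then G is chordal if and only if G_n is chordal, and when G_n is chordal with maximal cliques {C_{n1},…,C_{nm}}, the maximal cliques of G are exactly the sets (⋃ over all n_c+1 copies of C_{nj}) ∪ {v*} for j = 1,…,m. -/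
/-- The graph `G` built from `G_n`: `n_c + 1` copies of `G_n` (vertices `(p, v)`), with the
copies of each vertex pairwise adjacent, vertices of different copies adjacent whenever
their underlying vertices are adjacent or equal in `G_n` (adjacency in the same copy given
by `G_n`), plus one extra universal vertex `v* = Sum.inr ()`. -/
def blowUp (nc : ℕ) (N : Type*) (Gn : SimpleGraph N) :
    SimpleGraph ((Fin (nc + 1) × N) ⊕ Unit) where
  Adj a b :=
    match a, b with
    | Sum.inl (p, v), Sum.inl (q, w) => (v = w ∧ p ≠ q) ∨ Gn.Adj v w
    | Sum.inl _, Sum.inr _ => True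
    | Sum.inr _, Sum.inl _ => True
    | Sum.inr _, Sum.inr _ => False
  symm := by
    refine ⟨?_⟩
    rintro (⟨p, v⟩ | u) (⟨q, w⟩ | u') h
    · rcases h with ⟨rfl, hpq⟩ | h
      · exact Or.inl ⟨rfl, hpq.symm⟩
      · exact Or.inr h.symm
    · trivial
    · trivial
    · exact h
  loopless := by
    refine ⟨?_⟩
    rintro (⟨p, v⟩ | u) h
    · rcases h with ⟨_, hpq⟩ | h
      · exact hpq rfl
      · exact Gn.loopless.irrefl v h
    · exact h

private lemma zmod_natCast_ne_zero {n : ℕ} (h4 : 4 ≤ n) {k : ℕ} (hk : 0 < k) (hkn : k < n) :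
    (k : ZMod n) ≠ 0 := by
  haveI : NeZero n := ⟨by omega⟩
  intro h
  have h2 := congrArg ZMod.val h
  rw [ZMod.val_natCast_of_lt hkn, ZMod.val_zero] at h2
  omega

private lemma ne02 {n : ℕ} (h4 : 4 ≤ n) (i : ZMod n) : i ≠ i + 2 := by
  intro h
  have h2 : (2 : ZMod n) = 0 := left_eq_add.mp h
  have h3 := zmod_natCast_ne_zero h4 (k := 2) (by norm_num) (by omega)
  rw [Nat.cast_ofNat] at h3
  exact h3 h2

private lemma ne21 {n : ℕ} (h4 : 4 ≤ n) (i : ZMod n) : i + 2 ≠ i + 1 := by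
  intro h
  rw [show (2 : ZMod n) = 1 + 1 by norm_num, ← add_assoc] at h
  have h2 : (1 : ZMod n) = 0 := left_eq_add.mp h.symm
  have h3 := zmod_natCast_ne_zero h4 (k := 1) (by norm_num) (by omega)
  rw [Nat.cast_one] at h3
  exact h3 h2

private lemma ne03 {n : ℕ} (h4 : 4 ≤ n) (i : ZMod n) : i ≠ i + 2 + 1 := by
  intro h
  rw [add_assoc, show (2 : ZMod n) + 1 = 3 by norm_num] at h
  have h2 : (3 : ZMod n) = 0 := left_eq_add.mp h
  have h3 := zmod_natCast_ne_zero h4 (k := 3) (by norm_num) (by omega)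
  rw [Nat.cast_ofNat] at h3
  exact h3 h2

private def bigS (nc : ℕ) {N : Type*} (C : Set N) : Set ((Fin (nc + 1) × N) ⊕ Unit) :=
  (Sum.inl '' {pv : Fin (nc + 1) × N | pv.2 ∈ C}) ∪ {Sum.inr ()}

private lemma bigS_clique {nc : ℕ} {N : Type*} {Gn : SimpleGraph N} {C : Set N}
    (hC : Gn.IsClique C) : (blowUp nc N Gn).IsClique (bigS nc C) := by
  rintro a ha b hb hab
  rcases ha with ⟨⟨p, v⟩, hv, rfl⟩ | ha
  · rcases hb with ⟨⟨q, w⟩, hw, rfl⟩ | hb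
    · by_cases hvw : v = w
      · subst hvw
        refine Or.inl ⟨rfl, ?_⟩
        intro hpq
        exact hab (by rw [hpq])
      · exact Or.inr (hC hv hw hvw)
    · rcases hb with rfl
      trivial
  · rcases ha with rfl
    rcases hb with ⟨⟨q, w⟩, hw, rfl⟩ | hb
    · trivial
    · rcases hb with rfl
      exact absurd rfl hab

private lemma proj_clique {nc : ℕ} {N : Type*} {Gn : SimpleGraph N}
    {s : Set ((Fin (nc + 1) × N) ⊕ Unit)} (hs : (blowUp nc N Gn).IsClique s) :
    Gn.IsClique {v : N | ∃ p, Sum.inl (p, v) ∈ s} := by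
  rintro v ⟨p, hp⟩ w ⟨q, hq⟩ hvw
  have hadj := hs hp hq (by simp [hvw])
  rcases hadj with ⟨h1, _⟩ | h2
  · exact absurd h1 hvw
  · exact h2

private lemma exists_max_clique_s17 {N : Type*} [Fintype N] {Gn : SimpleGraph N} {C : Set N}
    (hC : Gn.IsClique C) : ∃ C' : Set N, IsMaxClq Gn C' ∧ C ⊆ C' := by
  have hfin : ({t : Set N | Gn.IsClique t ∧ C ⊆ t}).Finite := Set.toFinite _
  obtain ⟨t, ht, htmax⟩ := Set.Finite.exists_maximalFor id _ hfin ⟨C, hC, subset_refl C⟩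
  refine ⟨t, ⟨ht.1, ?_⟩, ht.2⟩
  intro t' ht' htt'
  exact Set.Subset.antisymm htt' (htmax ⟨ht', ht.2.trans htt'⟩ htt')

/-- the blow-up of `G_n` with a universal vertex is chordal iff `G_n` is
chordal, and when `G_n` is chordal, the maximal cliques of the blow-up are exactly the
unions of all copies of a maximal clique of `G_n` together with the universal vertex. -/
theorem stmt17 (nc : ℕ) (N : Type) [Fintype N] [DecidableEq N] (Gn : SimpleGraph N) :
    (IsChordal (blowUp nc N Gn) ↔ IsChordal Gn) ∧
      (IsChordal Gn →
        ∀ s : Set ((Fin (nc + 1) × N) ⊕ Unit),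
          IsMaxClq (blowUp nc N Gn) s ↔
            ∃ C : Set N, IsMaxClq Gn C ∧
              s = (Sum.inl '' {pv : Fin (nc + 1) × N | pv.2 ∈ C}) ∪ {Sum.inr ()}) := by
  constructor
  · constructor
    · -- blowUp chordal → Gn chordal
      intro hc n hn f hinj hadj
      have hc' := hc n hn (fun i => Sum.inl ((0 : Fin (nc + 1)), f i))
        (by
          intro i j hij
          simp only [Sum.inl.injEq, Prod.mk.injEq] at hij
          exact hinj hij.2)
        (fun i => Or.inr (hadj i))
      obtain ⟨i, j, h1, h2, h3, h4⟩ := hc'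
      refine ⟨i, j, h1, h2, h3, ?_⟩
      rcases h4 with ⟨_, hpq⟩ | h
      · exact absurd rfl hpq
      · exact h
    · -- Gn chordal → blowUp chordal
      intro hc n hn f hinj hadj
      by_cases hstar : ∃ i, f i = Sum.inr ()
      · obtain ⟨i, hi⟩ := hstar
        refine ⟨i, i + 2, ne02 hn i, ne21 hn i, ne03 hn i, ?_⟩
        rw [hi]
        cases h2 : f (i + 2) with
        | inl pv => trivial
        | inr u =>
          exfalso
          exact ne02 hn i (hinj (by rw [hi, h2]))
      · push_neg at hstar
        have hfl : ∀ i, ∃ pw : Fin (nc + 1) × N, f i = Sum.inl pw := by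
          intro i
          cases h : f i with
          | inl pw => exact ⟨pw, rfl⟩
          | inr u => exact absurd h (by cases u; exact hstar i)
        choose g hg using hfl
        set p : ZMod n → Fin (nc + 1) := fun i => (g i).1 with hp
        set v : ZMod n → N := fun i => (g i).2 with hv
        have hgi : ∀ i, f i = Sum.inl (p i, v i) := fun i => hg i
        have hadj' : ∀ i, (v i = v (i + 1) ∧ p i ≠ p (i + 1)) ∨ Gn.Adj (v i) (v (i + 1)) := by
          intro i
          have h := hadj i
          rw [hgi i, hgi (i + 1)] at h
          exact h
        by_cases hrep : ∃ i j : ZMod n, i ≠ j ∧ j ≠ i + 1 ∧ i ≠ j + 1 ∧ v i = v j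
        · obtain ⟨i, j, h1, h2, h3, h4⟩ := hrep
          refine ⟨i, j, h1, h2, h3, ?_⟩
          rw [hgi i, hgi j]
          refine Or.inl ⟨h4, ?_⟩
          intro hpq
          exact h1 (hinj (by rw [hgi i, hgi j, h4, hpq]))
        · push_neg at hrep
          have hvne : ∀ i j : ZMod n, i ≠ j → j ≠ i + 1 → i ≠ j + 1 → v i ≠ v j := hrep
          by_cases hcons : ∃ i, v i = v (i + 1)
          · obtain ⟨i, hi⟩ := hcons
            refine ⟨i, i + 2, ne02 hn i, ne21 hn i, ne03 hn i, ?_⟩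
            have h12 : v (i + 1) ≠ v (i + 2) := by
              intro h
              exact hvne i (i + 2) (ne02 hn i) (ne21 hn i) (ne03 hn i) (hi.trans h)
            have hadj12 : Gn.Adj (v (i + 1)) (v (i + 2)) := by
              rcases hadj' (i + 1) with ⟨h1, _⟩ | h2
              · rw [add_assoc] at h1
                norm_num at h1
                exact absurd h1 h12
              · rw [add_assoc] at h2
                norm_num at h2
                exact h2
            rw [hgi i, hgi (i + 2)]
            exact Or.inr (hi ▸ hadj12)
          · push_neg at hcons
            have hvinj : Function.Injective v := by
              intro i j hij
              by_contra hne
              by_cases h1 : j = i + 1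
              · exact hcons i (by rw [← h1, hij])
              · by_cases h2 : i = j + 1
                · exact hcons j (by rw [← h2, hij])
                · exact hvne i j hne h1 h2 hij
            have hvadj : ∀ i, Gn.Adj (v i) (v (i + 1)) := by
              intro i
              rcases hadj' i with ⟨h1, _⟩ | h2
              · exact absurd h1 (hcons i)
              · exact h2
            obtain ⟨i, j, h1, h2, h3, h4⟩ := hc n hn v hvinj hvadj
            refine ⟨i, j, h1, h2, h3, ?_⟩
            rw [hgi i, hgi j]
            exact Or.inr h4
  · -- maximal cliques
    intro _ s
    constructor
    · rintro ⟨hs, hsmax⟩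
      -- first, Sum.inr () ∈ s
      have hstar : Sum.inr () ∈ s := by
        have hclq : (blowUp nc N Gn).IsClique (s ∪ {Sum.inr ()}) := by
          rintro a ha b hb hab
          rcases ha with ha | ha
          · rcases hb with hb | hb
            · exact hs ha hb hab
            · rcases hb with rfl
              cases a with
              | inl pv => trivial
              | inr u => exact absurd (by cases u; rfl) hab
          · rcases ha with rfl
            rcases hb with hb | hb
            · cases b with
              | inl pv => trivial
              | inr u => exact absurd (by cases u; rfl) hab
            · rcases hb with rfl
              exact absurd rfl hab
        have := hsmax _ hclq Set.subset_union_left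
        rw [this]
        exact Or.inr rfl
      set C : Set N := {w : N | ∃ q, Sum.inl (q, w) ∈ s} with hCdef
      have hCclq : Gn.IsClique C := proj_clique hs
      obtain ⟨C', ⟨hC'clq, hC'max⟩, hCC'⟩ := exists_max_clique_s17 hCclq
      have hsub : s ⊆ bigS nc C' := by
        rintro a ha
        cases a with
        | inl pv =>
          exact Or.inl ⟨pv, hCC' ⟨pv.1, ha⟩, rfl⟩
        | inr u =>
          cases u
          exact Or.inr rfl
      have := hsmax _ (bigS_clique hC'clq) hsub
      exact ⟨C', ⟨hC'clq, hC'max⟩, this⟩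
    · rintro ⟨C, ⟨hCclq, hCmax⟩, rfl⟩
      refine ⟨bigS_clique hCclq, ?_⟩
      intro t ht hst
      have hproj : C ⊆ {w : N | ∃ q, Sum.inl (q, w) ∈ t} := by
        intro w hw
        exact ⟨0, hst (Or.inl ⟨(0, w), hw, rfl⟩)⟩
      have hCeq : C = {w : N | ∃ q, Sum.inl (q, w) ∈ t} := hCmax _ (proj_clique ht) hproj
      apply Set.Subset.antisymm hst
      rintro a ha
      cases a with
      | inl pv =>
        have : pv.2 ∈ C := by
          rw [hCeq]
          exact ⟨pv.1, ha⟩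
        exact Or.inl ⟨pv, this, rfl⟩
      | inr u =>
        cases u
        exact Or.inr rfl
end
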